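/- arXiv:2602.00578 — 3 statements merged into one kernel-verified Lean document; each statement's English description precedes it below -/
import Mathlib

section
/- Fix a positive integer n, and let G be a subgroup of the group of permutations of ℤ/nℤ each of whose elements is an affine map, i.e. for every g ∈ G there exist a unit a ∈ (ℤ/nℤ)^× and b ∈ ℤ/nℤ with g(x) = a·x + b for all x ∈ ℤ/nℤ. Let λ(G) denote the minimum, over v ∈ ℤ/nℤ, of the cardinality of the G-orbit of v. Then for every v ∈ ℤ/nℤ, λ(G) divides the cardinality of the G-orbit of v. -/
namespace AffOrbit


lemma pow_step (p : ℕ) (hp : p.Prime) (y : ℤ) (i : ℕ)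
    (h : (p:ℤ)^(i+1) ∣ y - 1) : (p:ℤ)^(i+2) ∣ y^p - 1 := by
  have hgeom : (∑ k ∈ Finset.range p, y ^ k) * (y - 1) = y ^ p - 1 := geom_sum_mul y p
  have hy1 : (y : ZMod p) = 1 := by
    have hpd : (p:ℤ) ∣ y - 1 := dvd_trans (dvd_pow_self (p:ℤ) (Nat.succ_ne_zero i)) h
    have h0 : ((y - 1 : ℤ) : ZMod p) = 0 := by
      rw [ZMod.intCast_zmod_eq_zero_iff_dvd]; exact hpd
    push_cast at h0
    linear_combination h0
  have hS : (p:ℤ) ∣ (∑ k ∈ Finset.range p, y ^ k) := by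
    rw [← ZMod.intCast_zmod_eq_zero_iff_dvd]
    push_cast
    rw [Finset.sum_congr rfl (fun k _ => by rw [hy1, one_pow])]
    simp [Finset.sum_const, ZMod.natCast_self]
  have : (p:ℤ)^(i+2) ∣ (∑ k ∈ Finset.range p, y ^ k) * (y - 1) := by
    have : (p:ℤ)^(i+2) = (p:ℤ) * (p:ℤ)^(i+1) := by ring
    rw [this]
    exact mul_dvd_mul hS h
  rwa [hgeom] at this

lemma iter_pow (p : ℕ) (hp : p.Prime) (x : ℤ) (h : (p:ℤ) ∣ x - 1) :
    ∀ i : ℕ, (p:ℤ)^(i+1) ∣ x^(p^i) - 1 := by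
  intro i
  induction i with
  | zero => simpa using h
  | succ i ih =>
      have := pow_step p hp (x^(p^i)) i ih
      rwa [← pow_mul, ← pow_succ] at this

lemma unit_lift (p : ℕ) (hp : p.Prime) (E : ℕ) (hE : 1 ≤ E) (x : ℤ) (M : ℕ)
    (hM : ¬ p ∣ M) (h1 : (p:ℤ)^E ∣ x^M - 1) (h2 : (p:ℤ) ∣ x - 1) :
    (p:ℤ)^E ∣ x - 1 := by
  have hM0 : M ≠ 0 := by rintro rfl; exact hM (dvd_zero p)
  have hpow : (p:ℤ)^E ∣ x^(p^(E-1)) - 1 := by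
    have := iter_pow p hp x h2 (E-1)
    rwa [Nat.sub_add_cancel hE] at this
  -- move to ZMod (p^E)
  set N := p ^ E with hN
  have hcast : ∀ K : ℕ, (p:ℤ)^E ∣ x^K - 1 → (x : ZMod N)^K = 1 := by
    intro K hK
    have : ((x^K - 1 : ℤ) : ZMod N) = 0 := by
      rw [ZMod.intCast_zmod_eq_zero_iff_dvd]
      exact_mod_cast hK
    push_cast at this
    linear_combination this
  have o1 : orderOf (x : ZMod N) ∣ p^(E-1) := orderOf_dvd_of_pow_eq_one (hcast _ hpow)
  have o2 : orderOf (x : ZMod N) ∣ M := orderOf_dvd_of_pow_eq_one (hcast _ h1)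
  have hco : Nat.Coprime (p^(E-1)) M := Nat.Coprime.pow_left _ ((hp.coprime_iff_not_dvd).mpr hM)
  have : orderOf (x : ZMod N) ∣ 1 := by
    have := Nat.dvd_gcd o1 o2
    rwa [Nat.Coprime.gcd_eq_one hco] at this
  have hx1 : (x : ZMod N) = 1 := orderOf_eq_one_iff.mp (Nat.dvd_one.mp this)
  have : ((x - 1 : ℤ) : ZMod N) = 0 := by push_cast [hx1]; ring
  rw [ZMod.intCast_zmod_eq_zero_iff_dvd] at this
  exact_mod_cast this



lemma core_aux (d c₁ c₂ : ℕ) (hd : d ≠ 0) (hc₁ : c₁ ∣ d) (hc₂ : c₂ ∣ d) (x : ℤ)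
    (Hd : (d:ℤ) ∣ (c₁:ℤ) * ((c₂:ℤ) * x))
    (p : ℕ) (hp : p.Prime)
    (hdich : ¬ p ∣ c₁ ∨ p ^ d.factorization p ∣ c₁)
    (j : ℕ) (hj1 : p^j ∣ d / c₁) (hj2 : p^j ∣ d / c₂) : (p:ℤ)^j ∣ x := by
  have hc₁0 : c₁ ≠ 0 := fun h => hd (by simpa [h] using hc₁)
  have hc₂0 : c₂ ≠ 0 := fun h => hd (by simpa [h] using hc₂)
  set E := d.factorization p with hE
  rcases hdich with hnd | hdvd
  · -- ¬ p ∣ c₁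
    set m := c₂.factorization p with hm
    have hordc : p ^ m * (c₂ / p ^ m) = c₂ := Nat.ordProj_mul_ordCompl_eq_self c₂ p
    have hc' : ¬ p ∣ (c₂ / p ^ m) := Nat.not_dvd_ordCompl hp hc₂0
    -- m + j ≤ E
    have hmj : p ^ (m + j) ∣ d := by
      have : p ^ m * p ^ j ∣ c₂ * (d / c₂) := mul_dvd_mul (Nat.ordProj_dvd c₂ p) hj2
      rw [Nat.mul_div_cancel' hc₂] at this
      rwa [← pow_add] at this
    have hmjE : m + j ≤ E := (Nat.Prime.pow_dvd_iff_le_factorization hp hd).mp hmj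
    -- p^E ∣ c₁ * c₂ * x
    have hpE : (p:ℤ)^E ∣ (c₁:ℤ) * ((c₂:ℤ) * x) := by
      have h1 : (p:ℕ)^E ∣ d := Nat.ordProj_dvd d p
      exact dvd_trans (by exact_mod_cast Int.natCast_dvd_natCast.mpr h1) Hd
    -- rewrite c₂
    have hc2eq : (c₂ : ℤ) = (p:ℤ)^m * ((c₂ / p ^ m : ℕ) : ℤ) := by exact_mod_cast hordc.symm
    have hpEm : (p:ℤ)^(E - m) ∣ (c₁:ℤ) * (((c₂ / p ^ m : ℕ) : ℤ) * x) := by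
      have hEe : E = m + (E - m) := by omega
      rw [hEe, pow_add] at hpE
      rw [hc2eq] at hpE
      have hp0 : ((p:ℤ)^m) ≠ 0 := pow_ne_zero _ (by exact_mod_cast hp.ne_zero)
      have : (c₁:ℤ) * ((p:ℤ)^m * (((c₂ / p ^ m : ℕ) : ℤ)) * x) = (p:ℤ)^m * ((c₁:ℤ) * (((c₂ / p ^ m : ℕ) : ℤ) * x)) := by ring
      rw [this] at hpE
      exact (mul_dvd_mul_iff_left hp0).mp hpE
    -- coprime
    have hcop : IsCoprime ((p:ℤ)^(E-m)) ((c₁:ℤ) * ((c₂ / p ^ m : ℕ) : ℤ)) := by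
      have h1 : Nat.Coprime (p^(E-m)) (c₁ * (c₂ / p ^ m)) := by
        apply Nat.Coprime.pow_left
        rw [Nat.Prime.coprime_iff_not_dvd hp]
        intro hdd
        rcases (Nat.Prime.dvd_mul hp).mp hdd with h | h
        · exact hnd h
        · exact hc' h
      have := Nat.isCoprime_iff_coprime.mpr h1
      push_cast at this ⊢
      exact this
    have hx : (p:ℤ)^(E-m) ∣ x := by
      apply hcop.dvd_of_dvd_mul_left
      have : (c₁:ℤ) * (((c₂ / p ^ m : ℕ) : ℤ) * x) = (c₁:ℤ) * ((c₂ / p ^ m : ℕ) : ℤ) * x := by ring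
      rwa [this] at hpEm
    exact dvd_trans (pow_dvd_pow _ (by omega)) hx
  · -- p^E ∣ c₁ : then j = 0
    have : p ^ (E + j) ∣ d := by
      have : p ^ E * p ^ j ∣ c₁ * (d / c₁) := mul_dvd_mul hdvd hj1
      rw [Nat.mul_div_cancel' hc₁] at this
      rwa [← pow_add] at this
    have hEj : E + j ≤ E := (Nat.Prime.pow_dvd_iff_le_factorization hp hd).mp this
    have : j = 0 := by omega
    simp [this]

lemma MM : ∀ g : ℕ, ∀ s t : ℕ, s ≠ 0 → t ≠ 0 → Nat.gcd s t = g →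
    ∃ m₁ k₁ m₂ k₂, s = m₁ * k₁ ∧ t = m₂ * k₂ ∧ Nat.Coprime k₁ m₁ ∧ Nat.Coprime k₂ m₂ ∧
      Nat.Coprime m₁ m₂ ∧ Nat.lcm s t ∣ m₁ * m₂ := by
  intro g
  induction g using Nat.strong_induction_on with
  | _ g IH =>
    intro s t hs ht hg
    rcases eq_or_ne g 1 with rfl | hg1
    · refine ⟨s, 1, t, 1, by ring, by ring, Nat.coprime_one_left _, Nat.coprime_one_left _, hg, ?_⟩
      exact Nat.lcm_dvd (Dvd.intro _ rfl) (Dvd.intro_left _ rfl)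
    · have hg0 : g ≠ 0 := by
        rintro rfl
        exact hs (Nat.eq_zero_of_gcd_eq_zero_left hg)
      obtain ⟨q, hq, hqg⟩ := Nat.exists_prime_and_dvd hg1
      set e := s.factorization q with he
      set f := t.factorization q with hf
      set s' := s / q ^ e with hs'
      set t' := t / q ^ f with ht'
      have hse : q ^ e * s' = s := Nat.ordProj_mul_ordCompl_eq_self s q
      have hte : q ^ f * t' = t := Nat.ordProj_mul_ordCompl_eq_self t q
      have hqs' : ¬ q ∣ s' := Nat.not_dvd_ordCompl hq hs
      have hqt' : ¬ q ∣ t' := Nat.not_dvd_ordCompl hq ht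
      have hs'0 : s' ≠ 0 := (Nat.ordCompl_pos q hs).ne'
      have ht'0 : t' ≠ 0 := (Nat.ordCompl_pos q ht).ne'
      have hglt : Nat.gcd s' t' < g := by
        have hdvd : Nat.gcd s' t' ∣ g := by
          rw [← hg]
          exact Nat.dvd_gcd ((Nat.gcd_dvd_left s' t').trans ⟨q ^ e, by rw [← hse]; ring⟩)
            ((Nat.gcd_dvd_right s' t').trans ⟨q ^ f, by rw [← hte]; ring⟩)
        have hne : Nat.gcd s' t' ≠ g := by
          intro hEq
          apply hqs'
          have : q ∣ Nat.gcd s' t' := hEq ▸ hqg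
          exact this.trans (Nat.gcd_dvd_left s' t')
        exact lt_of_le_of_ne (Nat.le_of_dvd (Nat.pos_of_ne_zero hg0) hdvd) hne
      obtain ⟨m₁, k₁, m₂, k₂, hS, hT, hk₁, hk₂, hmm, hlcm⟩ := IH _ hglt s' t' hs'0 ht'0 rfl
      have hqm₁ : ¬ q ∣ m₁ := fun h => hqs' (hS ▸ h.mul_right k₁)
      have hqm₂ : ¬ q ∣ m₂ := fun h => hqt' (hT ▸ h.mul_right k₂)
      have hqk₁ : ¬ q ∣ k₁ := fun h => hqs' (hS ▸ h.mul_left m₁)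
      have hqk₂ : ¬ q ∣ k₂ := fun h => hqt' (hT ▸ h.mul_left m₂)
      have cqk₁ : Nat.Coprime q k₁ := (hq.coprime_iff_not_dvd).mpr hqk₁
      have cqk₂ : Nat.Coprime q k₂ := (hq.coprime_iff_not_dvd).mpr hqk₂
      have cqm₁ : Nat.Coprime q m₁ := (hq.coprime_iff_not_dvd).mpr hqm₁
      have cqm₂ : Nat.Coprime q m₂ := (hq.coprime_iff_not_dvd).mpr hqm₂
      have hsd : s' ∣ m₁ * m₂ := (Nat.dvd_lcm_left s' t').trans hlcm
      have htd : t' ∣ m₁ * m₂ := (Nat.dvd_lcm_right s' t').trans hlcm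
      rcases le_or_gt f e with hfe | hef
      · refine ⟨q ^ e * m₁, k₁, m₂, q ^ f * k₂, ?_, ?_, ?_, ?_, ?_, ?_⟩
        · rw [← hse, hS]; ring
        · rw [← hte, hT]; ring
        · exact Nat.Coprime.mul_right ((cqk₁.symm.pow_right e)) hk₁
        · exact Nat.Coprime.mul (cqm₂.pow_left f) hk₂
        · exact Nat.Coprime.mul (cqm₂.pow_left e) hmm
        · apply Nat.lcm_dvd
          · calc s = q ^ e * s' := hse.symm
              _ ∣ q ^ e * (m₁ * m₂) := mul_dvd_mul_left _ hsd
              _ = q ^ e * m₁ * m₂ := by ring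
          · calc t = q ^ f * t' := hte.symm
              _ ∣ q ^ e * (m₁ * m₂) := mul_dvd_mul (pow_dvd_pow q hfe) htd
              _ = q ^ e * m₁ * m₂ := by ring
      · refine ⟨m₁, q ^ e * k₁, q ^ f * m₂, k₂, ?_, ?_, ?_, ?_, ?_, ?_⟩
        · rw [← hse, hS]; ring
        · rw [← hte, hT]; ring
        · exact Nat.Coprime.mul (cqm₁.pow_left e) hk₁
        · exact Nat.Coprime.mul_right (cqk₂.symm.pow_right f) hk₂
        · exact Nat.Coprime.mul_right (cqm₁.symm.pow_right f) hmm
        · apply Nat.lcm_dvd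
          · calc s = q ^ e * s' := hse.symm
              _ ∣ q ^ f * (m₁ * m₂) := mul_dvd_mul (pow_dvd_pow q hef.le) hsd
              _ = m₁ * (q ^ f * m₂) := by ring
          · calc t = q ^ f * t' := hte.symm
              _ ∣ q ^ f * (m₁ * m₂) := mul_dvd_mul_left _ htd
              _ = m₁ * (q ^ f * m₂) := by ring


lemma cyc_gen (S : Set ℤ) : ∃ c : ℤ, (∀ x ∈ S, c ∣ x) ∧
    (∀ x : ℤ, x ∈ AddSubgroup.closure S ↔ c ∣ x) := by
  obtain ⟨c, hc⟩ := Int.subgroup_cyclic (AddSubgroup.closure S)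
  have hmem : ∀ x : ℤ, x ∈ AddSubgroup.closure S ↔ c ∣ x := by
    intro x
    rw [hc, ← AddSubgroup.zmultiples_eq_closure, Int.mem_zmultiples_iff]
  exact ⟨c, fun x hx => (hmem x).mp (AddSubgroup.subset_closure hx), hmem⟩

lemma closure_le_dvd (S : Set ℤ) (c : ℤ) (h : ∀ x ∈ S, c ∣ x) :
    ∀ x ∈ AddSubgroup.closure S, c ∣ x := by
  intro x hx
  have hle : AddSubgroup.closure S ≤ AddSubgroup.zmultiples c := by
    rw [AddSubgroup.zmultiples_eq_closure, AddSubgroup.closure_le]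
    intro y hy
    rw [SetLike.mem_coe, ← AddSubgroup.zmultiples_eq_closure, Int.mem_zmultiples_iff]
    exact h y hy
  exact Int.mem_zmultiples_iff.mp (hle hx)


lemma core (d : ℕ) (hd : d ≠ 0) (A B : Set ℤ) (v w : ℤ)
    (H1 : ∀ α ∈ A, ∀ β ∈ B, (d:ℤ) ∣ α * β * (v - w))
    (H2 : ∀ p : ℕ, p.Prime → p ∣ d →
        (∀ α ∈ A, ¬ (p:ℤ) ∣ α ∨ (p:ℤ) ^ d.factorization p ∣ α) ∨
        (∀ β ∈ B, ¬ (p:ℤ) ∣ β ∨ (p:ℤ) ^ d.factorization p ∣ β)) :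
    ∃ u : ℤ, (∀ α ∈ A, (d:ℤ) ∣ α * (u - v)) ∧ (∀ β ∈ B, (d:ℤ) ∣ β * (u - w)) := by
  classical
  obtain ⟨c₁, hc₁A, hmem₁⟩ := cyc_gen (A ∪ {(d:ℤ)})
  obtain ⟨c₂, hc₂B, hmem₂⟩ := cyc_gen (B ∪ {(d:ℤ)})
  have hdc₁ : c₁ ∣ (d:ℤ) := hc₁A _ (by simp)
  have hdc₂ : c₂ ∣ (d:ℤ) := hc₂B _ (by simp)
  have hc₁A' : ∀ α ∈ A, c₁ ∣ α := fun α hα => hc₁A α (Or.inl hα)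
  have hc₂B' : ∀ β ∈ B, c₂ ∣ β := fun β hβ => hc₂B β (Or.inl hβ)
  -- key: d ∣ c₁ * c₂ * (v - w)
  have Hd : (d:ℤ) ∣ c₁ * c₂ * (v - w) := by
    -- first: for every x in closure(A∪{d}), ∀ β ∈ B ∪ {d}: d ∣ x * β * (v-w)
    -- via subgroup Z
    have step1 : ∀ α ∈ A ∪ {(d:ℤ)}, (d:ℤ) ∣ α * c₂ * (v - w) := by
      intro α hα
      -- closure argument in second coordinate
      set Z₂ : AddSubgroup ℤ :=
        { carrier := {y : ℤ | (d:ℤ) ∣ α * y * (v - w)}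
          zero_mem' := by simp
          add_mem' := by
            intro a b ha hb
            simp only [Set.mem_setOf_eq] at *
            have : α * (a + b) * (v - w) = α * a * (v-w) + α * b * (v-w) := by ring
            rw [this]; exact dvd_add ha hb
          neg_mem' := by
            intro a ha
            simp only [Set.mem_setOf_eq] at *
            have : α * (-a) * (v - w) = -(α * a * (v-w)) := by ring
            rw [this]; exact dvd_neg.mpr ha }
      have hBZ : B ∪ {(d:ℤ)} ⊆ Z₂ := by
        intro β hβ
        rcases hβ with hβ | hβ
        · rcases hα with hα | hα
          · exact H1 α hα β hβ
          · simp only [Set.mem_singleton_iff] at hα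
            subst hα
            show (d:ℤ) ∣ (d:ℤ) * β * (v - w)
            exact ⟨β * (v - w), by ring⟩
        · simp only [Set.mem_singleton_iff] at hβ
          subst hβ
          show (d:ℤ) ∣ α * (d:ℤ) * (v - w)
          exact ⟨α * (v-w), by ring⟩
      have hc₂Z : c₂ ∈ Z₂ := by
        have hle : AddSubgroup.closure (B ∪ {(d:ℤ)}) ≤ Z₂ := (AddSubgroup.closure_le _).mpr hBZ
        exact hle ((hmem₂ c₂).mpr dvd_rfl)
      exact hc₂Z
    -- now closure in the first coordinate
    set Z₁ : AddSubgroup ℤ :=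
      { carrier := {x : ℤ | (d:ℤ) ∣ x * c₂ * (v - w)}
        zero_mem' := by simp
        add_mem' := by
          intro a b ha hb
          simp only [Set.mem_setOf_eq] at *
          have : (a + b) * c₂ * (v - w) = a * c₂ * (v-w) + b * c₂ * (v-w) := by ring
          rw [this]; exact dvd_add ha hb
        neg_mem' := by
          intro a ha
          simp only [Set.mem_setOf_eq] at *
          have : (-a) * c₂ * (v - w) = -(a * c₂ * (v-w)) := by ring
          rw [this]; exact dvd_neg.mpr ha }
    have hle : AddSubgroup.closure (A ∪ {(d:ℤ)}) ≤ Z₁ := (AddSubgroup.closure_le _).mpr step1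
    exact hle ((hmem₁ c₁).mpr dvd_rfl)
  -- natAbs versions
  set n₁ := c₁.natAbs with hn₁
  set n₂ := c₂.natAbs with hn₂
  have habs₁ : ((n₁ : ℤ)) ∣ c₁ ∧ (c₁ ∣ (n₁:ℤ)) := ⟨Int.natAbs_dvd.mpr dvd_rfl, Int.dvd_natAbs.mpr dvd_rfl⟩
  have habs₂ : ((n₂ : ℤ)) ∣ c₂ ∧ (c₂ ∣ (n₂:ℤ)) := ⟨Int.natAbs_dvd.mpr dvd_rfl, Int.dvd_natAbs.mpr dvd_rfl⟩
  have hn₁d : n₁ ∣ d := by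
    have : (n₁ : ℤ) ∣ (d : ℤ) := habs₁.1.trans hdc₁
    exact_mod_cast this
  have hn₂d : n₂ ∣ d := by
    have : (n₂ : ℤ) ∣ (d : ℤ) := habs₂.1.trans hdc₂
    exact_mod_cast this
  have hn₁0 : n₁ ≠ 0 := by
    intro h0
    rw [hn₁, Int.natAbs_eq_zero] at h0
    subst h0
    exact hd (by exact_mod_cast zero_dvd_iff.mp hdc₁)
  have hn₂0 : n₂ ≠ 0 := by
    intro h0
    rw [hn₂, Int.natAbs_eq_zero] at h0
    subst h0
    exact hd (by exact_mod_cast zero_dvd_iff.mp hdc₂)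
  set k₁ := d / n₁ with hk₁
  set k₂ := d / n₂ with hk₂
  have hdk₁ : n₁ * k₁ = d := Nat.mul_div_cancel' hn₁d
  have hdk₂ : n₂ * k₂ = d := Nat.mul_div_cancel' hn₂d
  have hk₁0 : k₁ ≠ 0 := fun h => hd (by rw [← hdk₁, h, mul_zero])
  have hk₂0 : k₂ ≠ 0 := fun h => hd (by rw [← hdk₂, h, mul_zero])
  -- d ∣ n-version of Hd (and symmetric)
  have HdN : (d:ℤ) ∣ (n₁:ℤ) * ((n₂:ℤ) * (v - w)) := by
    obtain ⟨e₁, he₁⟩ := habs₁.1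
    obtain ⟨e₂, he₂⟩ := habs₂.1
    -- (n₁:ℤ) = c₁ * u with u = ±1; easier: n₁ * (n₂ * x) = ± c₁c₂x
    rcases Int.natAbs_eq c₁ with h1 | h1 <;> rcases Int.natAbs_eq c₂ with h2 | h2 <;>
      [skip; skip; skip; skip] <;>
      · rw [← hn₁, ← hn₂] at *
        first
        | (have : (n₁:ℤ) * ((n₂:ℤ) * (v - w)) = c₁ * c₂ * (v - w) := by rw [h1, h2]; ring
           rw [this]; exact Hd)
        | (have : (n₁:ℤ) * ((n₂:ℤ) * (v - w)) = -(c₁ * c₂ * (v - w)) := by rw [h1, h2]; ring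
           rw [this]; exact (dvd_neg).mpr Hd)
  have HdN' : (d:ℤ) ∣ (n₂:ℤ) * ((n₁:ℤ) * (v - w)) := by
    have : (n₂:ℤ) * ((n₁:ℤ) * (v - w)) = (n₁:ℤ) * ((n₂:ℤ) * (v - w)) := by ring
    rw [this]; exact HdN
  -- dichotomy transfer to n₁ resp. n₂
  have hdich : ∀ p : ℕ, p.Prime → p ∣ d →
      (¬ p ∣ n₁ ∨ p ^ d.factorization p ∣ n₁) ∨ (¬ p ∣ n₂ ∨ p ^ d.factorization p ∣ n₂) := by
    intro p hp hpd
    have transfer : ∀ (S : Set ℤ) (c : ℤ), (∀ x ∈ S, ¬ (p:ℤ) ∣ x ∨ (p:ℤ) ^ d.factorization p ∣ x) →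
        (∀ x ∈ S, c ∣ x) → (∀ x : ℤ, x ∈ AddSubgroup.closure (S ∪ {(d:ℤ)}) ↔ c ∣ x) →
        (¬ p ∣ c.natAbs ∨ p ^ d.factorization p ∣ c.natAbs) := by
      intro S c hdichS hcS hmem
      by_cases hall : ∀ x ∈ S, (p:ℤ) ^ d.factorization p ∣ x
      · right
        have hpE : (p:ℤ) ^ d.factorization p ∣ c := by
          apply closure_le_dvd (S ∪ {(d:ℤ)}) _ ?_ c ((hmem c).mpr dvd_rfl)
          intro x hx
          rcases hx with hx | hx
          · exact hall x hx
          · simp only [Set.mem_singleton_iff] at hx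
            subst hx
            have : (p:ℕ) ^ d.factorization p ∣ d := Nat.ordProj_dvd d p
            exact_mod_cast Int.natCast_dvd_natCast.mpr this
        have h2 : ((p ^ d.factorization p : ℕ) : ℤ) ∣ c := by exact_mod_cast hpE
        rw [Int.natCast_dvd] at h2
        exact h2
      · left
        push_neg at hall
        obtain ⟨x, hxS, hx⟩ := hall
        rcases hdichS x hxS with h | h
        · intro hpc
          exact h ((Int.natCast_dvd.mpr hpc).trans (hcS x hxS))
        · exact absurd h hx
    rcases H2 p hp hpd with h | h
    · exact Or.inl (transfer A c₁ h hc₁A' hmem₁)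
    · exact Or.inr (transfer B c₂ h hc₂B' hmem₂)
  -- gcd k₁ k₂ divides v - w
  have hgcd : (Nat.gcd k₁ k₂ : ℤ) ∣ v - w := by
    rcases eq_or_ne (v - w) 0 with h0 | h0
    · rw [h0]; exact dvd_zero _
    have hg0 : Nat.gcd k₁ k₂ ≠ 0 := fun h => hk₁0 (Nat.eq_zero_of_gcd_eq_zero_left h)
    rw [Int.natCast_dvd]
    rw [← Nat.factorization_le_iff_dvd hg0 (Int.natAbs_ne_zero.mpr h0)]
    rw [Finsupp.le_iff]
    intro p hps
    have hp : p.Prime := Nat.prime_of_mem_primeFactors ((Nat.support_factorization _) ▸ hps)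
    set j := (Nat.gcd k₁ k₂).factorization p with hj
    have hj1 : p ^ j ∣ k₁ := (Nat.ordProj_dvd _ _).trans (Nat.gcd_dvd_left _ _)
    have hj2 : p ^ j ∣ k₂ := (Nat.ordProj_dvd _ _).trans (Nat.gcd_dvd_right _ _)
    have hpd : p ∣ d := by
      have : p ∣ Nat.gcd k₁ k₂ := Nat.dvd_of_factorization_pos (by
        have := Finsupp.mem_support_iff.mp hps; exact this)
      exact (this.trans (Nat.gcd_dvd_left _ _)).trans ⟨n₁, by rw [← hdk₁]; ring⟩
    have hres : (p:ℤ) ^ j ∣ v - w := by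
      rcases hdich p hp hpd with h | h
      · exact core_aux d n₁ n₂ hd hn₁d hn₂d (v - w) HdN p hp h j
          (by rw [hk₁] at hj1; exact hj1) (by rw [hk₂] at hj2; exact hj2)
      · exact core_aux d n₂ n₁ hd hn₂d hn₁d (v - w) HdN' p hp h j
          (by rw [hk₂] at hj2; exact hj2) (by rw [hk₁] at hj1; exact hj1)
    have : ((p ^ j : ℕ) : ℤ) ∣ v - w := by exact_mod_cast hres
    rw [Int.natCast_dvd] at this
    exact (Nat.Prime.pow_dvd_iff_le_factorization hp (Int.natAbs_ne_zero.mpr h0)).mp this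
  -- Bezout construction of u
  obtain ⟨t, ht⟩ := hgcd
  set a := Int.gcdA k₁ k₂ with ha
  set b := Int.gcdB k₁ k₂ with hb
  have hbez : (Nat.gcd k₁ k₂ : ℤ) = k₁ * a + k₂ * b := Int.gcd_eq_gcd_ab k₁ k₂
  refine ⟨v - k₁ * a * t, ?_, ?_⟩
  · intro α hα
    obtain ⟨e, he⟩ := hc₁A' α hα
    have : α * (v - k₁ * a * t - v) = -(c₁ * (k₁:ℤ) * (e * a * t)) := by
      rw [he]; ring
    rw [this]
    apply dvd_neg.mpr
    have hdn : (d:ℤ) ∣ c₁ * (k₁:ℤ) := by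
      obtain ⟨e₁, he₁⟩ := habs₂.1
      rcases Int.natAbs_eq c₁ with h1 | h1
      · refine ⟨1, ?_⟩
        rw [← hn₁] at h1
        rw [h1, mul_one, ← hdk₁]
        push_cast; ring
      · refine ⟨-1, ?_⟩
        rw [← hn₁] at h1
        rw [h1, ← hdk₁]
        push_cast; ring
    exact Dvd.dvd.mul_right hdn _
  · intro β hβ
    obtain ⟨e, he⟩ := hc₂B' β hβ
    have key : v - k₁ * a * t - w = (k₂:ℤ) * (b * t) := by
      have : v - w = (Nat.gcd k₁ k₂ : ℤ) * t := ht
      rw [hbez] at this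
      linarith [this]
    have : β * (v - k₁ * a * t - w) = c₂ * (k₂:ℤ) * (e * (b * t)) := by
      rw [key, he]; ring
    rw [this]
    have hdn : (d:ℤ) ∣ c₂ * (k₂:ℤ) := by
      rcases Int.natAbs_eq c₂ with h2 | h2
      · refine ⟨1, ?_⟩
        rw [← hn₂] at h2
        rw [h2, mul_one, ← hdk₂]
        push_cast; ring
      · refine ⟨-1, ?_⟩
        rw [← hn₂] at h2
        rw [h2, ← hdk₂]
        push_cast; ring
    exact Dvd.dvd.mul_right hdn _



open MulAction

variable {n : ℕ} [NeZero n] (G : Subgroup (Equiv.Perm (ZMod n)))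

/-- translations contained in G, as a subgroup of `ZMod n` -/
def tset : AddSubgroup (ZMod n) where
  carrier := {c | Equiv.addRight c ∈ G}
  zero_mem' := by
    have : Equiv.addRight (0 : ZMod n) = 1 := by
      ext x; simp
    simp only [Set.mem_setOf_eq, this]
    exact one_mem G
  add_mem' := by
    intro a b ha hb
    simp only [Set.mem_setOf_eq] at *
    have : Equiv.addRight (a + b) = Equiv.addRight b * Equiv.addRight a := by
      ext x; simp [Equiv.Perm.mul_apply]
    rw [this]
    exact mul_mem hb ha
  neg_mem' := by
    intro a ha
    simp only [Set.mem_setOf_eq] at *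
    have : Equiv.addRight (-a) = (Equiv.addRight a)⁻¹ := by
      ext x; simp
    rw [this]
    exact inv_mem ha

lemma tset_mul (x : ZMod n) {c : ZMod n} (hc : c ∈ tset G) : x * c ∈ tset G := by
  have hx : ((x.val : ℕ) : ZMod n) = x := by
    rw [ZMod.natCast_val, ZMod.cast_id]
  have : x * c = x.val • c := by rw [nsmul_eq_mul, hx]
  rw [this]
  exact AddSubgroup.nsmul_mem (tset G) hc x.val

variable (hG : ∀ g ∈ G, ∃ (a : (ZMod n)ˣ) (b : ZMod n), ∀ x : ZMod n, g x = a * x + b)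

noncomputable def piFun (g : ↥G) : (ZMod n)ˣ := (hG g.1 g.2).choose

lemma piFun_spec (g : ↥G) : ∀ x, (g : Equiv.Perm (ZMod n)) x = piFun G hG g * x + (g : Equiv.Perm (ZMod n)) 0 := by
  intro x
  obtain ⟨b, hb⟩ := (hG g.1 g.2).choose_spec
  rw [hb x, hb 0, mul_zero, zero_add]; rfl

lemma unit_val (g : ↥G) : (piFun G hG g : ZMod n) = (g : Equiv.Perm (ZMod n)) 1 - (g : Equiv.Perm (ZMod n)) 0 := by
  rw [piFun_spec G hG g 1, mul_one]; ring

noncomputable def pihom : ↥G →* (ZMod n)ˣ where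
  toFun := piFun G hG
  map_one' := by
    apply Units.ext
    rw [unit_val G hG 1]
    simp
  map_mul' := by
    intro g h
    apply Units.ext
    rw [unit_val G hG (g * h)]
    have hgh : ∀ x, ((g * h : ↥G) : Equiv.Perm (ZMod n)) x
        = (g : Equiv.Perm (ZMod n)) ((h : Equiv.Perm (ZMod n)) x) := by
      intro x; rfl
    rw [hgh 1, hgh 0, piFun_spec G hG g ((h : Equiv.Perm (ZMod n)) 1),
      piFun_spec G hG g ((h : Equiv.Perm (ZMod n)) 0),
      piFun_spec G hG h 1, piFun_spec G hG h 0]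
    push_cast
    ring

lemma pihom_val (g : ↥G) : (pihom G hG g : ZMod n)
    = (g : Equiv.Perm (ZMod n)) 1 - (g : Equiv.Perm (ZMod n)) 0 := unit_val G hG g

lemma pihom_spec (g : ↥G) : ∀ x, (g : Equiv.Perm (ZMod n)) x = pihom G hG g * x + (g : Equiv.Perm (ZMod n)) 0 :=
  piFun_spec G hG g

/-- the subgroup of G moving v within a translation of v -/
def Sv (v : ZMod n) : Subgroup ↥G where
  carrier := {g | (g : Equiv.Perm (ZMod n)) v - v ∈ tset G}
  one_mem' := by
    simp only [Set.mem_setOf_eq]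
    have : ((1 : ↥G) : Equiv.Perm (ZMod n)) v - v = 0 := by simp
    rw [this]; exact zero_mem _
  mul_mem' := by
    intro g h hg hh
    simp only [Set.mem_setOf_eq] at *
    have hgh : ((g * h : ↥G) : Equiv.Perm (ZMod n)) v
        = (g : Equiv.Perm (ZMod n)) ((h : Equiv.Perm (ZMod n)) v) := rfl
    have : ((g * h : ↥G) : Equiv.Perm (ZMod n)) v - v
        = (pihom G hG g : ZMod n) * ((h : Equiv.Perm (ZMod n)) v - v)
          + ((g : Equiv.Perm (ZMod n)) v - v) := by
      rw [hgh, pihom_spec G hG g ((h : Equiv.Perm (ZMod n)) v), pihom_spec G hG g v]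
      ring
    rw [this]
    exact add_mem (tset_mul G _ hh) hg
  inv_mem' := by
    intro g hg
    simp only [Set.mem_setOf_eq] at *
    set x := ((g⁻¹ : ↥G) : Equiv.Perm (ZMod n)) v with hx
    have h1 : (g : Equiv.Perm (ZMod n)) x = v := by
      rw [hx]
      have : (g : Equiv.Perm (ZMod n)) (((g⁻¹ : ↥G) : Equiv.Perm (ZMod n)) v)
          = ((g * g⁻¹ : ↥G) : Equiv.Perm (ZMod n)) v := rfl
      rw [this, mul_inv_cancel]
      simp
    have h2 : v = pihom G hG g * x + (g : Equiv.Perm (ZMod n)) 0 := by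
      rw [← h1]; exact pihom_spec G hG g x
    have h3 : (g : Equiv.Perm (ZMod n)) v = pihom G hG g * v + (g : Equiv.Perm (ZMod n)) 0 :=
      pihom_spec G hG g v
    have key : x - v = ((pihom G hG g)⁻¹ : (ZMod n)ˣ) * (-((g : Equiv.Perm (ZMod n)) v - v)) := by
      have hc : (pihom G hG g : ZMod n) * (x - v) = -((g : Equiv.Perm (ZMod n)) v - v) := by
        linear_combination h3 - h2
      calc x - v = ((pihom G hG g)⁻¹ : (ZMod n)ˣ) * ((pihom G hG g : ZMod n) * (x - v)) := by
            rw [← mul_assoc]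
            norm_cast
            rw [inv_mul_cancel]
            simp
        _ = ((pihom G hG g)⁻¹ : (ZMod n)ˣ) * (-((g : Equiv.Perm (ZMod n)) v - v)) := by rw [hc]
    show x - v ∈ tset G
    rw [key]
    exact tset_mul G _ (neg_mem hg)

noncomputable def Abar (v : ZMod n) : Subgroup (ZMod n)ˣ := Subgroup.map (pihom G hG) (Sv G hG v)

lemma comm_tset (g h : ↥G) :
    ((pihom G hG g : ZMod n) - 1) * ((h : Equiv.Perm (ZMod n)) 0)
      - ((pihom G hG h : ZMod n) - 1) * ((g : Equiv.Perm (ZMod n)) 0) ∈ tset G := by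
  set a := (pihom G hG g : ZMod n)
  set a' := (pihom G hG h : ZMod n)
  set b := (g : Equiv.Perm (ZMod n)) 0
  set b' := (h : Equiv.Perm (ZMod n)) 0
  set δ := (a - 1) * b' - (a' - 1) * b with hδ
  have key : Equiv.addRight δ * ((h * g : ↥G) : Equiv.Perm (ZMod n))
      = ((g * h : ↥G) : Equiv.Perm (ZMod n)) := by
    ext x
    have h1 : ((g * h : ↥G) : Equiv.Perm (ZMod n)) x
        = (g : Equiv.Perm (ZMod n)) ((h : Equiv.Perm (ZMod n)) x) := rfl
    have h2 : (Equiv.addRight δ * ((h * g : ↥G) : Equiv.Perm (ZMod n))) x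
        = (h : Equiv.Perm (ZMod n)) ((g : Equiv.Perm (ZMod n)) x) + δ := by
      simp [Equiv.Perm.mul_apply]
    rw [h1, h2, pihom_spec G hG g ((h : Equiv.Perm (ZMod n)) x),
      pihom_spec G hG h ((g : Equiv.Perm (ZMod n)) x),
      pihom_spec G hG h x, pihom_spec G hG g x, hδ]
    ring
  have hmem : Equiv.addRight δ ∈ G := by
    have : Equiv.addRight δ = ((g * h : ↥G) : Equiv.Perm (ZMod n))
        * (((h * g : ↥G) : Equiv.Perm (ZMod n)))⁻¹ := by
      rw [← key]; group
    rw [this]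
    exact mul_mem (g * h).2 (inv_mem (h * g).2)
  exact hmem

lemma b_cong {v : ZMod n} {g : ↥G} (hg : g ∈ Sv G hG v) :
    (g : Equiv.Perm (ZMod n)) 0 + ((pihom G hG g : ZMod n) - 1) * v ∈ tset G := by
  have h1 : (g : Equiv.Perm (ZMod n)) v - v ∈ tset G := hg
  have h2 : (g : Equiv.Perm (ZMod n)) v = pihom G hG g * v + (g : Equiv.Perm (ZMod n)) 0 :=
    pihom_spec G hG g v
  have : (g : Equiv.Perm (ZMod n)) 0 + ((pihom G hG g : ZMod n) - 1) * v
      = (g : Equiv.Perm (ZMod n)) v - v := by rw [h2]; ring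
  rw [this]; exact h1

lemma comm_rel {v w : ZMod n} {g h : ↥G} (hg : g ∈ Sv G hG v) (hh : h ∈ Sv G hG w) :
    ((pihom G hG g : ZMod n) - 1) * (((pihom G hG h : ZMod n) - 1) * (v - w)) ∈ tset G := by
  set a := (pihom G hG g : ZMod n)
  set a' := (pihom G hG h : ZMod n)
  set b := (g : Equiv.Perm (ZMod n)) 0
  set b' := (h : Equiv.Perm (ZMod n)) 0
  have hX : (a - 1) * b' - (a' - 1) * b ∈ tset G := comm_tset G hG g h
  have hY : (a - 1) * (b' + (a' - 1) * w) ∈ tset G := tset_mul G _ (b_cong G hG hh)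
  have hZ : (a' - 1) * (b + (a - 1) * v) ∈ tset G := tset_mul G _ (b_cong G hG hg)
  have : (a - 1) * ((a' - 1) * (v - w))
      = (a' - 1) * (b + (a - 1) * v) - (a - 1) * (b' + (a' - 1) * w)
        + ((a - 1) * b' - (a' - 1) * b) := by ring
  rw [this]
  exact add_mem (sub_mem hZ hY) hX

lemma mem_Sv_of {v u : ZMod n} {g : ↥G} (hg : g ∈ Sv G hG v)
    (h : ((pihom G hG g : ZMod n) - 1) * (u - v) ∈ tset G) : g ∈ Sv G hG u := by
  have h2 : (g : Equiv.Perm (ZMod n)) u = pihom G hG g * u + (g : Equiv.Perm (ZMod n)) 0 :=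
    pihom_spec G hG g u
  have h3 : (g : Equiv.Perm (ZMod n)) v = pihom G hG g * v + (g : Equiv.Perm (ZMod n)) 0 :=
    pihom_spec G hG g v
  show (g : Equiv.Perm (ZMod n)) u - u ∈ tset G
  have : (g : Equiv.Perm (ZMod n)) u - u
      = ((pihom G hG g : ZMod n) - 1) * (u - v) + ((g : Equiv.Perm (ZMod n)) v - v) := by
    rw [h2, h3]; ring
  rw [this]
  exact add_mem h hg

lemma card_stab (v : ZMod n) :
    Nat.card (MulAction.stabilizer ↥G v) = Nat.card ↥(Abar G hG v) := by
  have smul_eq : ∀ (g : ↥G) (x : ZMod n), g • x = (g : Equiv.Perm (ZMod n)) x := by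
    intro g x; rfl
  have stab_le : ∀ g : ↥G, g ∈ MulAction.stabilizer ↥G v → g ∈ Sv G hG v := by
    intro g hgs
    have : (g : Equiv.Perm (ZMod n)) v = v := by
      rw [← smul_eq]; exact hgs
    show (g : Equiv.Perm (ZMod n)) v - v ∈ tset G
    rw [this, sub_self]; exact zero_mem _
  set f : MulAction.stabilizer ↥G v → ↥(Abar G hG v) :=
    fun g => ⟨pihom G hG g.1, ⟨g.1, stab_le g.1 g.2, rfl⟩⟩ with hf
  apply Nat.card_eq_of_bijective f
  constructor
  · intro g g' hgg
    have h1 : pihom G hG g.1 = pihom G hG g'.1 := by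
      have := congrArg Subtype.val hgg
      exact this
    have hv : (g.1 : Equiv.Perm (ZMod n)) v = v := by rw [← smul_eq]; exact g.2
    have hv' : (g'.1 : Equiv.Perm (ZMod n)) v = v := by rw [← smul_eq]; exact g'.2
    have h0 : (g.1 : Equiv.Perm (ZMod n)) 0 = (g'.1 : Equiv.Perm (ZMod n)) 0 := by
      have e1 := pihom_spec G hG g.1 v
      have e2 := pihom_spec G hG g'.1 v
      rw [hv] at e1; rw [hv'] at e2
      rw [h1] at e1
      linear_combination e2 - e1
    apply Subtype.ext; apply Subtype.ext
    apply Equiv.ext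
    intro x
    rw [pihom_spec G hG g.1 x, pihom_spec G hG g'.1 x, h1, h0]
  · rintro ⟨a, g, hgSv, rfl⟩
    set c := (g : Equiv.Perm (ZMod n)) v - v with hc
    have hcT : c ∈ tset G := hgSv
    set tc : ↥G := ⟨Equiv.addRight c, hcT⟩ with htc
    have hpitc : pihom G hG tc = 1 := by
      apply Units.ext
      rw [pihom_val G hG tc]
      show (Equiv.addRight c) 1 - (Equiv.addRight c) 0 = ((1 : (ZMod n)ˣ) : ZMod n)
      simp
    refine ⟨⟨tc⁻¹ * g, ?_⟩, ?_⟩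
    · show (tc⁻¹ * g) • v = v
      rw [smul_eq]
      have : ((tc⁻¹ * g : ↥G) : Equiv.Perm (ZMod n)) v
          = (tc : Equiv.Perm (ZMod n))⁻¹ ((g : Equiv.Perm (ZMod n)) v) := rfl
      rw [this]
      have : (tc : Equiv.Perm (ZMod n))⁻¹ = Equiv.addRight (-c) := by
        show (Equiv.addRight c)⁻¹ = _
        ext x; simp
      rw [this]
      show (g : Equiv.Perm (ZMod n)) v + (-c) = v
      rw [hc]; ring
    · apply Subtype.ext
      show pihom G hG (tc⁻¹ * g) = pihom G hG g
      rw [map_mul, map_inv, hpitc, inv_one, one_mul]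

lemma orbit_card (v : ZMod n) :
    Nat.card (MulAction.orbit ↥G v) * Nat.card ↥(Abar G hG v) = Nat.card ↥G := by
  classical
  rw [← card_stab G hG v]
  haveI : Fintype ↥G := Fintype.ofFinite _
  haveI : Fintype (MulAction.orbit ↥G v) := Fintype.ofFinite _
  haveI : Fintype (MulAction.stabilizer ↥G v) := Fintype.ofFinite _
  rw [Nat.card_eq_fintype_card, Nat.card_eq_fintype_card, Nat.card_eq_fintype_card]
  exact MulAction.card_orbit_mul_card_stabilizer_eq_card_group ↥G v




lemma pow_subgroup (v : ZMod n) (m₁ k₁ : ℕ)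
    (hs : Nat.card ↥(Abar G hG v) = m₁ * k₁) (hco : Nat.Coprime k₁ m₁) :
    ∃ P : Subgroup (ZMod n)ˣ, m₁ ∣ Nat.card ↥P ∧ (∀ a ∈ P, a ^ m₁ = 1) ∧
      (∀ a ∈ P, ∃ g ∈ Sv G hG v, pihom G hG g = a) := by
  classical
  set B := Abar G hG v with hB
  set ϕ := (powMonoidHom k₁ : (ZMod n)ˣ →* (ZMod n)ˣ).comp B.subtype with hϕ
  have hcard : Nat.card ↥B = Nat.card ϕ.range * Nat.card ϕ.ker := by
    have h1 : Nat.card ↥B = Nat.card (↥B ⧸ ϕ.ker) * Nat.card ϕ.ker :=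
      Subgroup.card_eq_card_quotient_mul_card_subgroup ϕ.ker
    have h2 : Nat.card (↥B ⧸ ϕ.ker) = Nat.card ϕ.range :=
      Nat.card_congr (QuotientGroup.quotientKerEquivRange ϕ).toEquiv
    rw [h1, h2]
  have hkerpow : ∀ x : ↥B, x ∈ ϕ.ker → x ^ k₁ = 1 := by
    intro x hx
    have h1 : ((x : (ZMod n)ˣ)) ^ k₁ = 1 := hx
    apply Subtype.ext
    push_cast
    exact h1
  have hkercop : Nat.Coprime (Nat.card ϕ.ker) m₁ := by
    by_contra hcc
    obtain ⟨q, hq, hq1, hq2⟩ := Nat.Prime.not_coprime_iff_dvd.mp hcc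
    haveI : Fact q.Prime := ⟨hq⟩
    haveI : Fintype ↥(ϕ.ker) := Fintype.ofFinite _
    obtain ⟨x, hxord⟩ := exists_prime_orderOf_dvd_card (G := ↥ϕ.ker) q
      (by rwa [← Nat.card_eq_fintype_card])
    have hord : orderOf (x : ↥B) = q := by
      rw [← hxord]
      exact orderOf_injective (ϕ.ker).subtype Subtype.coe_injective x
    have : (x : ↥B) ^ k₁ = 1 := hkerpow _ x.2
    have hqk : q ∣ k₁ := hord ▸ orderOf_dvd_of_pow_eq_one this
    have : q ∣ 1 := Nat.dvd_gcd hqk hq2 |>.trans hco.dvd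
    exact hq.one_lt.ne' (Nat.dvd_one.mp this)
  refine ⟨ϕ.range, ?_, ?_, ?_⟩
  · -- m₁ ∣ card range
    have hkk : Nat.card ϕ.ker ∣ k₁ := by
      have h1 : Nat.card ϕ.ker ∣ m₁ * k₁ := hs ▸ Subgroup.card_subgroup_dvd_card ϕ.ker
      exact hkercop.dvd_of_dvd_mul_right (by rwa [mul_comm] at h1)
    obtain ⟨e, he⟩ := hkk
    have hk0 : Nat.card ϕ.ker ≠ 0 := Nat.card_pos.ne'
    have : m₁ * (Nat.card ϕ.ker * e) = Nat.card ϕ.range * Nat.card ϕ.ker := by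
      rw [← he, ← hs, hcard]
    refine ⟨e, ?_⟩
    have h2 : Nat.card ϕ.range * Nat.card ϕ.ker = m₁ * e * Nat.card ϕ.ker := by
      rw [← this]; ring
    exact (Nat.eq_of_mul_eq_mul_right (Nat.pos_of_ne_zero hk0) h2).symm ▸ rfl
  · rintro a ⟨y, rfl⟩
    have h1 : ϕ y = (y : (ZMod n)ˣ) ^ k₁ := rfl
    have h2 : y ^ (m₁ * k₁) = 1 := by
      rw [← hs]
      exact pow_card_eq_one'
    rw [h1, ← pow_mul, mul_comm k₁ m₁]
    calc ((y : (ZMod n)ˣ)) ^ (m₁ * k₁) = ((y ^ (m₁ * k₁) : ↥B) : (ZMod n)ˣ) := by push_cast; rfl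
      _ = 1 := by rw [h2]; rfl
  · rintro a ⟨y, rfl⟩
    obtain ⟨g, hgSv, hpg⟩ := y.2
    refine ⟨g ^ k₁, pow_mem hgSv k₁, ?_⟩
    rw [map_pow, hpg]
    rfl

lemma card_coprime (P R : Subgroup (ZMod n)ˣ) (m₁ m₂ : ℕ)
    (hP : ∀ a ∈ P, a ^ m₁ = 1) (hR : ∀ a ∈ R, a ^ m₂ = 1)
    (hmm : Nat.Coprime m₁ m₂) : Nat.Coprime (Nat.card ↥P) (Nat.card ↥R) := by
  classical
  by_contra hcc
  obtain ⟨q, hq, hq1, hq2⟩ := Nat.Prime.not_coprime_iff_dvd.mp hcc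
  haveI : Fact q.Prime := ⟨hq⟩
  haveI : Fintype ↥P := Fintype.ofFinite _
  haveI : Fintype ↥R := Fintype.ofFinite _
  obtain ⟨x, hx⟩ := exists_prime_orderOf_dvd_card (G := ↥P) q (by rwa [← Nat.card_eq_fintype_card])
  obtain ⟨y, hy⟩ := exists_prime_orderOf_dvd_card (G := ↥R) q (by rwa [← Nat.card_eq_fintype_card])
  have hxm : (x : (ZMod n)ˣ) ^ m₁ = 1 := hP _ x.2
  have hym : (y : (ZMod n)ˣ) ^ m₂ = 1 := hR _ y.2
  have hxo : orderOf (x : (ZMod n)ˣ) = q := by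
    rw [← hx]; exact orderOf_injective P.subtype Subtype.coe_injective x
  have hyo : orderOf (y : (ZMod n)ˣ) = q := by
    rw [← hy]; exact orderOf_injective R.subtype Subtype.coe_injective y
  have h1 : q ∣ m₁ := hxo ▸ orderOf_dvd_of_pow_eq_one hxm
  have h2 : q ∣ m₂ := hyo ▸ orderOf_dvd_of_pow_eq_one hym
  have : q ∣ 1 := (Nat.dvd_gcd h1 h2).trans hmm.dvd
  exact hq.one_lt.ne' (Nat.dvd_one.mp this)



lemma tset_gen : ∃ d : ℕ, d ≠ 0 ∧ d ∣ n ∧ (∀ x : ℤ, ((x : ZMod n) ∈ tset G ↔ (d:ℤ) ∣ x)) := by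
  obtain ⟨c, hc⟩ := Int.subgroup_cyclic (AddSubgroup.comap (Int.castAddHom (ZMod n)) (tset G))
  have hmem : ∀ x : ℤ, (x : ZMod n) ∈ tset G ↔ c ∣ x := by
    intro x
    have h1 : (x : ZMod n) ∈ tset G ↔
        x ∈ AddSubgroup.comap (Int.castAddHom (ZMod n)) (tset G) := by
      simp [AddSubgroup.mem_comap]
    rw [h1, hc, ← AddSubgroup.zmultiples_eq_closure, Int.mem_zmultiples_iff]
  have hnmem : ((n : ℤ) : ZMod n) ∈ tset G := by
    have : ((n : ℤ) : ZMod n) = 0 := by push_cast; exact ZMod.natCast_self n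
    rw [this]; exact zero_mem _
  have hdn' : c ∣ (n : ℤ) := (hmem _).mp hnmem
  refine ⟨c.natAbs, ?_, ?_, ?_⟩
  · intro h0
    rw [Int.natAbs_eq_zero] at h0; subst h0
    have : (n : ℤ) = 0 := zero_dvd_iff.mp hdn'
    exact (NeZero.ne n) (by exact_mod_cast this)
  · have : (c.natAbs : ℤ) ∣ (n : ℤ) := Int.natAbs_dvd.mpr hdn'
    exact_mod_cast this
  · intro x; rw [hmem, Int.natAbs_dvd]

lemma combine (v w : ZMod n) : ∃ u : ZMod n,
    Nat.lcm (Nat.card ↥(Abar G hG v)) (Nat.card ↥(Abar G hG w)) ∣ Nat.card ↥(Abar G hG u) := by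
  classical
  obtain ⟨d, hd0, hdn, hdmem⟩ := tset_gen G
  set s := Nat.card ↥(Abar G hG v) with hs
  set t := Nat.card ↥(Abar G hG w) with ht
  have hs0 : s ≠ 0 := Nat.card_pos.ne'
  have ht0 : t ≠ 0 := Nat.card_pos.ne'
  obtain ⟨m₁, k₁, m₂, k₂, hS, hT, hck₁, hck₂, hmm, hlcm⟩ := MM (Nat.gcd s t) s t hs0 ht0 rfl
  obtain ⟨P, hPcard, hPord, hPmem⟩ := pow_subgroup G hG v m₁ k₁ hS hck₁
  obtain ⟨R, hRcard, hRord, hRmem⟩ := pow_subgroup G hG w m₂ k₂ hT hck₂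
  set ℓ : (ZMod n)ˣ → ℤ := fun a => (((a : ZMod n).val : ℕ) : ℤ) with hℓ
  have hℓcast : ∀ a : (ZMod n)ˣ, ((ℓ a : ℤ) : ZMod n) = (a : ZMod n) := by
    intro a
    show (((((a : ZMod n).val : ℕ) : ℤ)) : ZMod n) = (a : ZMod n)
    push_cast
    rw [ZMod.natCast_val, ZMod.cast_id]
  set A := (fun a => ℓ a - 1) '' (P : Set (ZMod n)ˣ) with hA
  set B := (fun a => ℓ a - 1) '' (R : Set (ZMod n)ˣ) with hB
  set vz : ℤ := ((v.val : ℕ) : ℤ) with hvz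
  set wz : ℤ := ((w.val : ℕ) : ℤ) with hwz
  have hvcast : ((vz : ℤ) : ZMod n) = v := by
    rw [hvz]; push_cast; rw [ZMod.natCast_val, ZMod.cast_id]
  have hwcast : ((wz : ℤ) : ZMod n) = w := by
    rw [hwz]; push_cast; rw [ZMod.natCast_val, ZMod.cast_id]
  -- H1
  have H1 : ∀ α ∈ A, ∀ β ∈ B, (d:ℤ) ∣ α * β * (vz - wz) := by
    rintro α ⟨a, haP, rfl⟩ β ⟨b, hbR, rfl⟩
    rw [← hdmem]
    have hcast : (((ℓ a - 1) * (ℓ b - 1) * (vz - wz) : ℤ) : ZMod n)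
        = ((a : ZMod n) - 1) * (((b : ZMod n) - 1) * (v - w)) := by
      push_cast
      rw [hℓcast a, hℓcast b, hvcast, hwcast]
      ring
    rw [hcast]
    obtain ⟨g, hgSv, hpg⟩ := hPmem a haP
    obtain ⟨h, hhSw, hph⟩ := hRmem b hbR
    have := comm_rel G hG hgSv hhSw
    rwa [hpg, hph] at this
  -- order facts give unit_lift hypotheses
  have hordpow : ∀ (m : ℕ) (a : (ZMod n)ˣ), a ^ m = 1 → (n:ℤ) ∣ (ℓ a) ^ m - 1 := by
    intro m a ha
    rw [← ZMod.intCast_zmod_eq_zero_iff_dvd]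
    push_cast
    rw [hℓcast a]
    have : ((a : ZMod n)) ^ m = 1 := by
      have := congrArg (Units.val) ha
      rwa [Units.val_pow_eq_pow_val] at this
    rw [this]; ring
  have H2 : ∀ p : ℕ, p.Prime → p ∣ d →
      (∀ α ∈ A, ¬ (p:ℤ) ∣ α ∨ (p:ℤ) ^ d.factorization p ∣ α) ∨
      (∀ β ∈ B, ¬ (p:ℤ) ∣ β ∨ (p:ℤ) ^ d.factorization p ∣ β) := by
    intro p hp hpd
    set E := d.factorization p with hE
    have hE1 : 1 ≤ E := hp.factorization_pos_of_dvd hd0 hpd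
    have hpEn : (p:ℤ)^E ∣ (n:ℤ) := by
      have h1 : (p:ℕ)^E ∣ d := Nat.ordProj_dvd d p
      have h2 : (p:ℕ)^E ∣ n := h1.trans hdn
      exact_mod_cast Int.natCast_dvd_natCast.mpr h2
    have key : ∀ (m : ℕ), ¬ p ∣ m → ∀ a : (ZMod n)ˣ, a ^ m = 1 →
        (¬ (p:ℤ) ∣ (ℓ a - 1) ∨ (p:ℤ) ^ E ∣ (ℓ a - 1)) := by
      intro m hpm a ha
      by_cases hdvd : (p:ℤ) ∣ ℓ a - 1
      · right
        exact unit_lift p hp E hE1 (ℓ a) m hpm (hpEn.trans (hordpow m a ha)) hdvd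
      · left; exact hdvd
    by_cases hpm : p ∣ m₁
    · right
      have hpm₂ : ¬ p ∣ m₂ := by
        intro h2
        have : p ∣ 1 := (Nat.dvd_gcd hpm h2).trans hmm.dvd
        exact hp.one_lt.ne' (Nat.dvd_one.mp this)
      rintro β ⟨b, hbR, rfl⟩
      exact key m₂ hpm₂ b (hRord b hbR)
    · left
      rintro α ⟨a, haP, rfl⟩
      exact key m₁ hpm a (hPord a haP)
  obtain ⟨u, hu₁, hu₂⟩ := core d hd0 A B vz wz H1 H2
  set uz : ZMod n := ((u : ℤ) : ZMod n) with huz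
  have hPle : P ≤ Abar G hG uz := by
    intro a haP
    obtain ⟨g, hgSv, hpg⟩ := hPmem a haP
    have hα : (ℓ a - 1) ∈ A := ⟨a, haP, rfl⟩
    have hdu := hu₁ _ hα
    rw [← hdmem] at hdu
    have hcast : (((ℓ a - 1) * (u - vz) : ℤ) : ZMod n) = ((a : ZMod n) - 1) * (uz - v) := by
      push_cast
      rw [hℓcast a, hvcast]
    rw [hcast] at hdu
    have hgu : g ∈ Sv G hG uz := mem_Sv_of G hG hgSv (by rwa [hpg])
    exact ⟨g, hgu, hpg⟩
  have hRle : R ≤ Abar G hG uz := by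
    intro b hbR
    obtain ⟨h, hhSw, hph⟩ := hRmem b hbR
    have hβ : (ℓ b - 1) ∈ B := ⟨b, hbR, rfl⟩
    have hdu := hu₂ _ hβ
    rw [← hdmem] at hdu
    have hcast : (((ℓ b - 1) * (u - wz) : ℤ) : ZMod n) = ((b : ZMod n) - 1) * (uz - w) := by
      push_cast
      rw [hℓcast b, hwcast]
    rw [hcast] at hdu
    have hhu : h ∈ Sv G hG uz := mem_Sv_of G hG hhSw (by rwa [hph])
    exact ⟨h, hhu, hph⟩
  refine ⟨uz, ?_⟩
  calc Nat.lcm s t ∣ m₁ * m₂ := hlcm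
    _ ∣ Nat.card ↥P * Nat.card ↥R := mul_dvd_mul hPcard hRcard
    _ ∣ Nat.card ↥(P ⊔ R) :=
        (card_coprime P R m₁ m₂ hPord hRord hmm).mul_dvd_of_dvd_of_dvd
          (Subgroup.card_dvd_of_le le_sup_left) (Subgroup.card_dvd_of_le le_sup_right)
    _ ∣ Nat.card ↥(Abar G hG uz) := Subgroup.card_dvd_of_le (sup_le hPle hRle)


lemma champion {n : ℕ} [NeZero n] (G : Subgroup (Equiv.Perm (ZMod n)))
    (hG : ∀ g ∈ G, ∃ (a : (ZMod n)ˣ) (b : ZMod n), ∀ x : ZMod n, g x = a * x + b) :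
    ∃ u : ZMod n, ∀ v : ZMod n,
      Nat.card ↥(Abar G hG v) ∣ Nat.card ↥(Abar G hG u) := by
  classical
  have main : ∀ s : Finset (ZMod n), ∃ u, ∀ v ∈ s,
      Nat.card ↥(Abar G hG v) ∣ Nat.card ↥(Abar G hG u) := by
    intro s
    induction s using Finset.induction_on with
    | empty => exact ⟨0, by simp⟩
    | @insert a s ha ih =>
        obtain ⟨u0, hu0⟩ := ih
        obtain ⟨u1, hu1⟩ := combine G hG a u0
        refine ⟨u1, ?_⟩
        intro v hv
        rcases Finset.mem_insert.mp hv with rfl | hvs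
        · exact (Nat.dvd_lcm_left _ _).trans hu1
        · exact (hu0 v hvs).trans ((Nat.dvd_lcm_right _ _).trans hu1)
  obtain ⟨u, hu⟩ := main Finset.univ
  exact ⟨u, fun v => hu v (Finset.mem_univ v)⟩

end AffOrbit

open AffOrbit in
theorem stmt_6 (n : ℕ) (hn : 0 < n) (G : Subgroup (Equiv.Perm (ZMod n)))
    (hG : ∀ g ∈ G, ∃ (a : (ZMod n)ˣ) (b : ZMod n), ∀ x : ZMod n, g x = a * x + b)
    (v : ZMod n) :
    sInf {k : ℕ | ∃ w : ZMod n, k = Nat.card (MulAction.orbit G w)} ∣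
      Nat.card (MulAction.orbit G v) := by
  haveI : NeZero n := ⟨hn.ne'⟩
  classical
  obtain ⟨u, hu⟩ := champion G hG
  haveI : ∀ x : ZMod n, Nonempty ↥(MulAction.orbit (↥G) x) := by
    intro x
    exact (MulAction.nonempty_orbit x).to_subtype
  have horb : ∀ v' : ZMod n,
      Nat.card ↥(MulAction.orbit (↥G) u) ∣ Nat.card ↥(MulAction.orbit (↥G) v') := by
    intro v'
    have h1 := orbit_card G hG u
    have h2 := orbit_card G hG v'
    obtain ⟨k, hk⟩ := hu v'
    have hA0 : Nat.card ↥(Abar G hG v') ≠ 0 := Nat.card_pos.ne'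
    refine ⟨k, ?_⟩
    have heq : Nat.card ↥(MulAction.orbit (↥G) v') * Nat.card ↥(Abar G hG v')
        = (Nat.card ↥(MulAction.orbit (↥G) u) * k) * Nat.card ↥(Abar G hG v') := by
      rw [h2, ← h1, hk]; ring
    exact Nat.eq_of_mul_eq_mul_right (Nat.pos_of_ne_zero hA0) heq
  set K := {k : ℕ | ∃ w : ZMod n, k = Nat.card (MulAction.orbit (↥G) w)} with hK
  have hmemu : Nat.card ↥(MulAction.orbit (↥G) u) ∈ K := ⟨u, rfl⟩
  have hne : K.Nonempty := ⟨_, hmemu⟩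
  obtain ⟨w₀, hw₀⟩ := Nat.sInf_mem hne
  have hdvd : Nat.card ↥(MulAction.orbit (↥G) u) ∣ sInf K := hw₀ ▸ horb w₀
  have hle : sInf K ≤ Nat.card ↥(MulAction.orbit (↥G) u) := Nat.sInf_le hmemu
  have hpos : 0 < sInf K := by rw [hw₀]; exact Nat.card_pos
  have heq : sInf K = Nat.card ↥(MulAction.orbit (↥G) u) :=
    le_antisymm hle (Nat.le_of_dvd hpos hdvd)
  calc sInf K = Nat.card ↥(MulAction.orbit (↥G) u) := heq
    _ ∣ Nat.card (MulAction.orbit (↥G) v) := horb v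
end

section
/- Let p be a prime, l a positive integer, and n = p^l. Let G be a subgroup of the group of permutations of ℤ/nℤ each of whose elements is an affine map, i.e. for every g ∈ G there exist a unit a ∈ (ℤ/nℤ)^× and b ∈ ℤ/nℤ with g(x) = a·x + b for all x ∈ ℤ/nℤ. Let λ(G) denote the minimum, over v ∈ ℤ/nℤ, of the cardinality of the G-orbit of v. Then for every v ∈ ℤ/nℤ, λ(G) divides the cardinality of the G-orbit of v. -/
theorem stmt_7 (p : ℕ) (hp : p.Prime) (l : ℕ) (hl : 0 < l)
    (G : Subgroup (Equiv.Perm (ZMod (p ^ l))))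
    (hG : ∀ g ∈ G, ∃ (a : (ZMod (p ^ l))ˣ) (b : ZMod (p ^ l)),
      ∀ x : ZMod (p ^ l), g x = a * x + b)
    (v : ZMod (p ^ l)) :
    sInf {k : ℕ | ∃ w : ZMod (p ^ l), k = Nat.card (MulAction.orbit G w)} ∣
      Nat.card (MulAction.orbit G v) := by
  haveI : NeZero (p ^ l) := ⟨pow_ne_zero l hp.pos.ne'⟩
  haveI : Fact p.Prime := ⟨hp⟩
  haveI : NeZero p := ⟨hp.pos.ne'⟩
  -- choose affine data for each element of G
  obtain ⟨F, hF⟩ : ∃ F : G → (ZMod (p ^ l))ˣ × ZMod (p ^ l),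
      ∀ g : G, ∀ x : ZMod (p ^ l), (g : Equiv.Perm (ZMod (p ^ l))) x = ((F g).1 : ZMod (p ^ l)) * x + (F g).2 := by
    refine ⟨fun g => ⟨(hG g g.2).choose, (hG g g.2).choose_spec.choose⟩, fun g x => ?_⟩
    exact (hG g g.2).choose_spec.choose_spec x
  -- uniqueness of affine data
  have huniq : ∀ (a a' : (ZMod (p ^ l))ˣ) (b b' : ZMod (p ^ l)),
      (∀ x : ZMod (p ^ l), (a : ZMod (p ^ l)) * x + b = (a' : ZMod (p ^ l)) * x + b') → a = a' ∧ b = b' := by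
    intro a a' b b' h
    have h0 := h 0
    simp only [mul_zero, zero_add] at h0
    have h1 := h 1
    rw [mul_one, mul_one, h0, add_left_inj] at h1
    exact ⟨Units.ext h1, h0⟩
  have hsmul : ∀ (g : G) (x : ZMod (p ^ l)), g • x = (g : Equiv.Perm (ZMod (p ^ l))) x := fun _ _ => rfl
  -- multiplicativity of the affine data
  have hmul : ∀ g h : G, (F (g * h)).1 = (F g).1 * (F h).1 ∧
      (F (g * h)).2 = ((F g).1 : ZMod (p ^ l)) * (F h).2 + (F g).2 := by
    intro g h
    refine huniq _ _ _ _ fun x => ?_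
    rw [← hF]
    have : ((g * h : G) : Equiv.Perm (ZMod (p ^ l))) x
        = (g : Equiv.Perm (ZMod (p ^ l))) ((h : Equiv.Perm (ZMod (p ^ l))) x) := rfl
    rw [this, hF h, hF g, Units.val_mul]
    ring
  -- the multiplier homomorphism
  let π : G →* (ZMod (p ^ l))ˣ := MonoidHom.mk' (fun g => (F g).1) (fun g h => (hmul g h).1)
  have hπ : ∀ g : G, π g = (F g).1 := fun _ => rfl
  -- description of stabilizers
  have hstab : ∀ (u : ZMod (p ^ l)) (g : G), g ∈ MulAction.stabilizer G u →
      (F g).2 = u - ((F g).1 : ZMod (p ^ l)) * u := by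
    intro u g hg
    have h2 := MulAction.mem_stabilizer_iff.mp hg
    rw [hsmul, hF] at h2
    linear_combination h2
  -- orbit cardinalities via stabilizer index
  have horb : ∀ u : ZMod (p ^ l),
      Nat.card (MulAction.orbit G u) = (MulAction.stabilizer G u).index := by
    intro u
    rw [MulAction.index_stabilizer, Nat.card_coe_set_eq]
  have hGpos : 0 < Nat.card G := Nat.card_pos
  -- cardinality of stabilizer equals cardinality of its multiplier group
  have hstabcard : ∀ u : ZMod (p ^ l),
      Nat.card (MulAction.stabilizer G u)
        = Nat.card ((π.comp (MulAction.stabilizer G u).subtype).range) := by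
    intro u
    refine Nat.card_congr (Equiv.ofInjective _ ?_)
    intro g g' hgg'
    have ha : (F g.1).1 = (F g'.1).1 := hgg'
    have hb : (F g.1).2 = (F g'.1).2 := by
      rw [hstab u g.1 g.2, hstab u g'.1 g'.2, ha]
    apply Subtype.ext
    apply Subtype.ext
    apply Equiv.ext
    intro x
    rw [hF, hF, ha, hb]
  -- from divisibility of stabilizer cards to divisibility of orbit cards
  have hdvd_orbit : ∀ u u' : ZMod (p ^ l),
      Nat.card (MulAction.stabilizer G u') ∣ Nat.card (MulAction.stabilizer G u) →
      Nat.card (MulAction.orbit G u) ∣ Nat.card (MulAction.orbit G u') := by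
    intro u u' ⟨k, hk⟩
    rw [horb, horb]
    have h1 := (MulAction.stabilizer G u).index_mul_card
    have h2 := (MulAction.stabilizer G u').index_mul_card
    have hpos : 0 < Nat.card (MulAction.stabilizer G u') := Nat.card_pos
    refine ⟨k, Nat.eq_of_mul_eq_mul_right hpos ?_⟩
    calc (MulAction.stabilizer G u').index * Nat.card (MulAction.stabilizer G u')
        = (MulAction.stabilizer G u).index * Nat.card (MulAction.stabilizer G u) := by
          rw [h1, h2]
      _ = (MulAction.stabilizer G u).index * k * Nat.card (MulAction.stabilizer G u') := by
          rw [hk]; ring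
  by_cases hA : ∃ g : G, IsUnit (((F g).1 : ZMod (p ^ l)) - 1)
  · -- Case A : some element has a unique fixed point w
    obtain ⟨h0, hu⟩ := hA
    set b : (ZMod (p ^ l))ˣ := (F h0).1 with hb
    set c : ZMod (p ^ l) := (F h0).2 with hc
    set e : (ZMod (p ^ l))ˣ := hu.unit with he
    have hespec : (e : ZMod (p ^ l)) = (b : ZMod (p ^ l)) - 1 := hu.unit_spec
    set w : ZMod (p ^ l) := -((e⁻¹ : (ZMod (p ^ l))ˣ) : ZMod (p ^ l)) * c with hw
    have hcw : c = w - (b : ZMod (p ^ l)) * w := by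
      have h2 : ((e⁻¹ : (ZMod (p ^ l))ˣ) : ZMod (p ^ l)) * (e : ZMod (p ^ l)) = 1 := e.inv_mul
      rw [hw]
      linear_combination (c * ((e⁻¹ : (ZMod (p ^ l))ˣ) : ZMod (p ^ l))) * hespec + (-c) * h2
    -- translations in G can be scaled by arbitrary ring elements
    have htrans : ∀ d : ZMod (p ^ l), (∃ t : G, ∀ x, (t : Equiv.Perm (ZMod (p ^ l))) x = x + d) →
        ∀ r : ZMod (p ^ l), ∃ t : G, ∀ x, (t : Equiv.Perm (ZMod (p ^ l))) x = x + r * d := by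
      rintro d ⟨t, ht⟩ r
      have hpow : ∀ k : ℕ, ∀ x, ((t ^ k : G) : Equiv.Perm (ZMod (p ^ l))) x = x + (k : ZMod (p ^ l)) * d := by
        intro k
        induction k with
        | zero => intro x; simp
        | succ m ih =>
          intro x
          have : ((t ^ (m + 1) : G) : Equiv.Perm (ZMod (p ^ l))) x
              = ((t ^ m : G) : Equiv.Perm (ZMod (p ^ l))) ((t : Equiv.Perm (ZMod (p ^ l))) x) := by
            rw [pow_succ]
            rfl
          rw [this, ht, ih]
          push_cast
          ring
      refine ⟨t ^ r.val, fun x => ?_⟩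
      rw [hpow r.val x, ZMod.natCast_val, ZMod.cast_id]
    -- key step : multipliers of any stabilizer also occur in the stabilizer of w
    have hkey : ∀ (u : ZMod (p ^ l)) (g : G), g ∈ MulAction.stabilizer G u →
        ∃ g' : G, g' ∈ MulAction.stabilizer G w ∧ (F g').1 = (F g).1 := by
      intro u g hg
      set a : (ZMod (p ^ l))ˣ := (F g).1 with ha
      have hgb : (F g).2 = u - (a : ZMod (p ^ l)) * u := hstab u g hg
      set δ : ZMod (p ^ l) := (1 - (a : ZMod (p ^ l))) * (1 - (b : ZMod (p ^ l))) * (u - w) with hδ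
      -- the commutator of g and h0 is the translation by δ
      have hcomp : ∀ x, ((g * h0 : G) : Equiv.Perm (ZMod (p ^ l))) x
          = ((h0 * g : G) : Equiv.Perm (ZMod (p ^ l))) x + δ := by
        intro x
        have e1 : ((g * h0 : G) : Equiv.Perm (ZMod (p ^ l))) x
            = (g : Equiv.Perm (ZMod (p ^ l))) ((h0 : Equiv.Perm (ZMod (p ^ l))) x) := rfl
        have e2 : ((h0 * g : G) : Equiv.Perm (ZMod (p ^ l))) x
            = (h0 : Equiv.Perm (ZMod (p ^ l))) ((g : Equiv.Perm (ZMod (p ^ l))) x) := rfl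
        rw [e1, e2, hF, hF, hF, hF, hgb, ← hb, ← hc, hcw, ← ha, hδ]
        ring
      have htδ : ∃ t : G, ∀ x, (t : Equiv.Perm (ZMod (p ^ l))) x = x + δ := by
        refine ⟨(g * h0) * (h0 * g)⁻¹, fun x => ?_⟩
        have e3 : (((g * h0) * (h0 * g)⁻¹ : G) : Equiv.Perm (ZMod (p ^ l))) x
            = ((g * h0 : G) : Equiv.Perm (ZMod (p ^ l)))
              (((h0 * g : G) : Equiv.Perm (ZMod (p ^ l)))⁻¹ x) := rfl
        rw [e3, hcomp, Equiv.Perm.coe_inv, Equiv.apply_symm_apply]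
      obtain ⟨τ, hτ⟩ := htrans δ htδ (((a⁻¹ : (ZMod (p ^ l))ˣ) : ZMod (p ^ l)) * ((e⁻¹ : (ZMod (p ^ l))ˣ) : ZMod (p ^ l)))
      have hgτ : ∀ x, ((g * τ : G) : Equiv.Perm (ZMod (p ^ l))) x
          = (a : ZMod (p ^ l)) * x + (1 - (a : ZMod (p ^ l))) * w := by
        intro x
        have e4 : ((g * τ : G) : Equiv.Perm (ZMod (p ^ l))) x
            = (g : Equiv.Perm (ZMod (p ^ l))) ((τ : Equiv.Perm (ZMod (p ^ l))) x) := rfl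
        have h1 : ((e⁻¹ : (ZMod (p ^ l))ˣ) : ZMod (p ^ l)) * (e : ZMod (p ^ l)) = 1 := e.inv_mul
        have h2 : ((a : ZMod (p ^ l))) * ((a⁻¹ : (ZMod (p ^ l))ˣ) : ZMod (p ^ l)) = 1 := a.mul_inv
        have hb1 : ((e⁻¹ : (ZMod (p ^ l))ˣ) : ZMod (p ^ l)) * (1 - (b : ZMod (p ^ l))) = -1 := by
          linear_combination ((e⁻¹ : (ZMod (p ^ l))ˣ) : ZMod (p ^ l)) * hespec - h1
        have hac : (a : ZMod (p ^ l)) *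
            (((a⁻¹ : (ZMod (p ^ l))ˣ) : ZMod (p ^ l)) * ((e⁻¹ : (ZMod (p ^ l))ˣ) : ZMod (p ^ l)) * δ)
            = (1 - (a : ZMod (p ^ l))) * (w - u) := by
          rw [hδ]
          linear_combination (((e⁻¹ : (ZMod (p ^ l))ˣ) : ZMod (p ^ l)) * (1 - (a : ZMod (p ^ l))) *
              (1 - (b : ZMod (p ^ l))) * (u - w)) * h2 +
            ((1 - (a : ZMod (p ^ l))) * (u - w)) * hb1
        rw [e4, hτ, hF, hgb, ← ha]
        linear_combination hac
      refine ⟨g * τ, ?_, ?_⟩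
      · rw [MulAction.mem_stabilizer_iff, hsmul, hgτ]
        ring
      · refine ((huniq (F (g * τ)).1 a (F (g * τ)).2
          ((1 - (a : ZMod (p ^ l))) * w) fun x => ?_).1).trans ha
        rw [← hF, hgτ]
    -- the orbit of w divides every orbit
    have hdvd_all : ∀ u : ZMod (p ^ l),
        Nat.card (MulAction.orbit G w) ∣ Nat.card (MulAction.orbit G u) := by
      intro u
      refine hdvd_orbit w u ?_
      rw [hstabcard u, hstabcard w]
      refine Subgroup.card_dvd_of_le ?_
      rintro x ⟨⟨g, hg⟩, rfl⟩
      obtain ⟨g', hg', hgg'⟩ := hkey u g hg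
      exact ⟨⟨g', hg'⟩, hgg'⟩
    have hmem : Nat.card (MulAction.orbit G w)
        ∈ {k : ℕ | ∃ w' : ZMod (p ^ l), k = Nat.card (MulAction.orbit G w')} := ⟨w, rfl⟩
    have hsinf : sInf {k : ℕ | ∃ w' : ZMod (p ^ l), k = Nat.card (MulAction.orbit G w')}
        = Nat.card (MulAction.orbit G w) := by
      refine le_antisymm (Nat.sInf_le hmem) (le_csInf ⟨_, hmem⟩ ?_)
      rintro k ⟨u, rfl⟩
      have hpos : 0 < Nat.card (MulAction.orbit G u) := by
        have : (MulAction.orbit G u).Nonempty := ⟨u, MulAction.mem_orbit_self u⟩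
        haveI := this.to_subtype
        exact Nat.card_pos
      exact Nat.le_of_dvd hpos (hdvd_all u)
    rw [hsinf]
    exact hdvd_all v
  · -- Case B : every multiplier is ≡ 1 mod p, so all orbit sizes are powers of p
    push_neg at hA
    -- the kernel of π embeds additively in ZMod (p ^ l)
    have hker : Nat.card π.ker ∣ p ^ l := by
      have hinj : Function.Injective
          (fun g : π.ker => Multiplicative.ofAdd (F g.1).2) := by
        intro g g' hgg'
        have hb2 : (F g.1).2 = (F g'.1).2 := hgg'
        have ha1 : (F g.1).1 = 1 := g.2
        have ha1' : (F g'.1).1 = 1 := g'.2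
        apply Subtype.ext
        apply Subtype.ext
        apply Equiv.ext
        intro x
        rw [hF, hF, ha1, ha1', hb2]
      have hcard := Subgroup.card_dvd_of_injective
        (MonoidHom.mk' (fun g : π.ker => Multiplicative.ofAdd (F g.1).2)
          (by
            intro g h
            have h1 := (hmul g.1 h.1).2
            have ha1 : (F g.1).1 = 1 := g.2
            show Multiplicative.ofAdd (F (g.1 * h.1)).2
              = Multiplicative.ofAdd (F g.1).2 * Multiplicative.ofAdd (F h.1).2
            rw [← ofAdd_add]
            congr 1
            rw [h1, ha1]
            push_cast
            ring)) hinj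
      rwa [Nat.card_congr Multiplicative.toAdd, Nat.card_zmod] at hcard
    -- the range of π lies in the kernel of reduction mod p
    have hpl : p ∣ p ^ l := dvd_pow_self p hl.ne'
    have hrange : Nat.card π.range ∣ p ^ (l - 1) := by
      have hle : π.range ≤ (ZMod.unitsMap hpl).ker := by
        rintro x ⟨g, rfl⟩
        rw [MonoidHom.mem_ker]
        apply Units.ext
        have hx : ¬ IsUnit (((F g).1 : ZMod (p ^ l)) - 1) := hA g
        have hdvd : p ∣ ZMod.val (((F g).1 : ZMod (p ^ l)) - 1) := by
          by_contra hnd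
          apply hx
          have : (ZMod.val (((F g).1 : ZMod (p ^ l)) - 1) : ZMod (p ^ l)) = ((F g).1 : ZMod (p ^ l)) - 1 :=
            ZMod.natCast_zmod_val _
          rw [← this, ZMod.isUnit_iff_coprime]
          exact (Nat.coprime_pow_right_iff hl _ _).mpr
            ((Nat.Prime.coprime_iff_not_dvd hp).mpr hnd).symm
        have hcast : (ZMod.castHom hpl (ZMod p)) ((((F g).1 : ZMod (p ^ l))) - 1) = 0 := by
          have h5 : (ZMod.val (((F g).1 : ZMod (p ^ l)) - 1) : ZMod (p ^ l)) = ((F g).1 : ZMod (p ^ l)) - 1 :=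
            ZMod.natCast_zmod_val _
          rw [← h5, map_natCast]
          exact (ZMod.natCast_eq_zero_iff _ _).mpr hdvd
        have : (ZMod.castHom hpl (ZMod p)) (((F g).1 : ZMod (p ^ l))) = 1 := by
          have := hcast
          rw [map_sub, map_one, sub_eq_zero] at this
          exact this
        simpa [ZMod.unitsMap, hπ] using this
      have hUcard : Nat.card (ZMod.unitsMap hpl).ker = p ^ (l - 1) := by
        have h1 : Nat.card (ZMod (p ^ l))ˣ
            = Nat.card ((ZMod p)ˣ) * Nat.card (ZMod.unitsMap hpl).ker := by
          rw [Subgroup.card_eq_card_quotient_mul_card_subgroup (ZMod.unitsMap hpl).ker]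
          congr 1
          rw [Nat.card_congr (QuotientGroup.quotientKerEquivOfSurjective _
            (ZMod.unitsMap_surjective hpl)).toEquiv]
        have h2 : Nat.card (ZMod (p ^ l))ˣ = p ^ (l - 1) * (p - 1) := by
          rw [Nat.card_eq_fintype_card, ZMod.card_units_eq_totient,
            Nat.totient_prime_pow hp hl]
        have h3 : Nat.card ((ZMod p)ˣ) = p - 1 := by
          rw [Nat.card_eq_fintype_card, ZMod.card_units_eq_totient, Nat.totient_prime hp]
        rw [h2, h3] at h1
        have hp1 : 0 < p - 1 := by have := hp.two_le; omega
        refine (Nat.eq_of_mul_eq_mul_left hp1 ?_).symm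
        rw [← h1]
        ring
      calc Nat.card π.range ∣ Nat.card (ZMod.unitsMap hpl).ker :=
            Subgroup.card_dvd_of_le hle
        _ = p ^ (l - 1) := hUcard
    -- hence |G| divides a power of p  and so does every orbit size
    have hGdvd : Nat.card G ∣ p ^ ((l - 1) + l) := by
      have h1 : Nat.card (↥G) = Nat.card ((↥G) ⧸ π.ker) * Nat.card π.ker :=
        Subgroup.card_eq_card_quotient_mul_card_subgroup π.ker
      have h2 : Nat.card ((↥G) ⧸ π.ker) = Nat.card π.range :=
        Nat.card_congr (QuotientGroup.quotientKerEquivRange π).toEquiv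
      rw [h1, h2, pow_add]
      exact Nat.mul_dvd_mul hrange hker
    have horbdvd : ∀ u : ZMod (p ^ l), Nat.card (MulAction.orbit G u) ∣ p ^ ((l - 1) + l) := by
      intro u
      rw [horb]
      exact dvd_trans (Subgroup.index_dvd_card _) hGdvd
    set S : Set ℕ := {k : ℕ | ∃ w' : ZMod (p ^ l), k = Nat.card (MulAction.orbit G w')} with hS
    have hmemv : Nat.card (MulAction.orbit G v) ∈ S := ⟨v, rfl⟩
    have hsmem : sInf S ∈ S := Nat.sInf_mem ⟨_, hmemv⟩
    obtain ⟨u, hu⟩ := hsmem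
    have h1 : sInf S ∣ p ^ ((l - 1) + l) := hu ▸ horbdvd u
    have h2 : Nat.card (MulAction.orbit G v) ∣ p ^ ((l - 1) + l) := horbdvd v
    obtain ⟨i, hi, hi2⟩ := (Nat.dvd_prime_pow hp).mp h1
    obtain ⟨j, hj, hj2⟩ := (Nat.dvd_prime_pow hp).mp h2
    have hle2 : sInf S ≤ Nat.card (MulAction.orbit G v) := Nat.sInf_le hmemv
    rw [hi2, hj2] at hle2
    rw [hi2, hj2]
    exact pow_dvd_pow p ((Nat.pow_le_pow_iff_right hp.one_lt).mp hle2)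
end

section
/- Fix a positive integer n, and let G be a subgroup of the group of permutations of ℤ/nℤ each of whose elements is an affine map, i.e. for every g ∈ G there exist a unit a ∈ (ℤ/nℤ)^× and b ∈ ℤ/nℤ with g(x) = a·x + b for all x ∈ ℤ/nℤ. Let λ(G) denote the minimum, over v ∈ ℤ/nℤ, of the cardinality of the G-orbit of v. Then λ(G) divides n. -/
open Equiv MulAction Subgroup

namespace Stmt8

variable {Γ : Type*} [Group Γ] {X : Type*}

/-- orbit set of a hom into permutations -/
def oorb (φ : Γ →* Equiv.Perm X) (x : X) : Set X := Set.range (fun g => φ g x)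

def ostab (φ : Γ →* Equiv.Perm X) (x : X) : Subgroup Γ where
  carrier := {g | φ g x = x}
  one_mem' := by simp
  mul_mem' := by
    intro a b ha hb
    simp only [Set.mem_setOf_eq, map_mul, Equiv.Perm.mul_apply] at *
    rw [hb, ha]
  inv_mem' := by
    intro a ha
    simp only [Set.mem_setOf_eq, map_inv] at *
    conv_lhs => rw [← ha]
    exact Equiv.symm_apply_apply _ _

lemma mem_ostab_iff {φ : Γ →* Equiv.Perm X} {x : X} {g : Γ} :
    g ∈ ostab φ x ↔ φ g x = x := Iff.rfl

lemma card_oorb (φ : Γ →* Equiv.Perm X) (x : X) :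
    Nat.card (oorb φ x) = (ostab φ x).index := by
  letI : MulAction Γ X := MulAction.compHom X φ
  have horb : MulAction.orbit Γ x = oorb φ x := rfl
  have hstab : MulAction.stabilizer Γ x = ostab φ x := by ext g; rfl
  rw [← horb, Subgroup.index_eq_card, ← hstab]
  exact Nat.card_congr (MulAction.orbitEquivQuotientStabilizer Γ x)

lemma oorb_eq_orbit_range (φ : Γ →* Equiv.Perm X) (x : X) :
    oorb φ x = MulAction.orbit φ.range x := by
  ext y
  constructor
  · rintro ⟨g, rfl⟩; exact ⟨⟨φ g, ⟨g, rfl⟩⟩, rfl⟩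
  · rintro ⟨⟨p, g, rfl⟩, rfl⟩; exact ⟨g, rfl⟩

lemma orbit_subgroup_eq_oorb {α : Type*} (G : Subgroup (Equiv.Perm α)) (w : α) :
    MulAction.orbit G w = oorb G.subtype w := rfl

/-- explicit affine permutation -/
def affP {d : ℕ} (a : (ZMod d)ˣ) (b : ZMod d) : Equiv.Perm (ZMod d) where
  toFun x := a * x + b
  invFun y := (a⁻¹ : (ZMod d)ˣ) * (y - b)
  left_inv x := by
    simp only [add_sub_cancel_right, ← mul_assoc, ← Units.val_mul, inv_mul_cancel,
      Units.val_one, one_mul]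
  right_inv y := by
    simp only [← mul_assoc, ← Units.val_mul, mul_inv_cancel, Units.val_one, one_mul,
      sub_add_cancel]

@[simp] lemma affP_apply {d : ℕ} (a : (ZMod d)ˣ) (b x : ZMod d) :
    affP a b x = a * x + b := rfl

lemma affP_mul {d : ℕ} (a a' : (ZMod d)ˣ) (b b' : ZMod d) :
    affP a b * affP a' b' = affP (a * a') (a * b' + b) := by
  ext x
  simp [affP_apply, Equiv.Perm.mul_apply, mul_add, mul_assoc, add_assoc, Units.val_mul]


section Data

variable {n : ℕ} {G : Subgroup (Equiv.Perm (ZMod n))}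

def IsAff {d : ℕ} (g : Equiv.Perm (ZMod d)) : Prop :=
  ∃ (a : (ZMod d)ˣ) (b : ZMod d), ∀ x, g x = a * x + b

lemma aff_unique {d : ℕ} {g : Equiv.Perm (ZMod d)} {a a' : (ZMod d)ˣ} {b b' : ZMod d}
    (h : ∀ x, g x = a * x + b) (h' : ∀ x, g x = a' * x + b') : a = a' ∧ b = b' := by
  have hb : b = b' := by
    have h0 := h 0; have h0' := h' 0
    simp only [mul_zero, zero_add] at h0 h0'
    rw [h0] at h0'; exact h0'
  have ha : (a : ZMod d) = (a' : ZMod d) := by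
    have h1 := h 1; have h1' := h' 1
    simp only [mul_one] at h1 h1'
    rw [h1] at h1'
    rw [hb] at h1'
    exact add_right_cancel h1'
  exact ⟨Units.ext ha, hb⟩

variable (hG : ∀ g ∈ G, IsAff g)

noncomputable def mA (g : ↥G) : (ZMod n)ˣ := (hG g.1 g.2).choose

noncomputable def mC (g : ↥G) : ZMod n := (hG g.1 g.2).choose_spec.choose

lemma mspec (g : ↥G) : ∀ x, (g : Equiv.Perm (ZMod n)) x = mA hG g * x + mC hG g :=
  (hG g.1 g.2).choose_spec.choose_spec

lemma mspec_mul (g h : ↥G) :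
    ∀ x, ((g * h : ↥G) : Equiv.Perm (ZMod n)) x
      = ((mA hG g * mA hG h : (ZMod n)ˣ) : ZMod n) * x + (mA hG g * mC hG h + mC hG g) := by
  intro x
  have : ((g * h : ↥G) : Equiv.Perm (ZMod n)) x
      = (g : Equiv.Perm (ZMod n)) ((h : Equiv.Perm (ZMod n)) x) := rfl
  rw [this, mspec hG h, mspec hG g, Units.val_mul]
  ring

lemma mA_mul (g h : ↥G) : mA hG (g * h) = mA hG g * mA hG h :=
  (aff_unique (mspec hG (g * h)) (mspec_mul hG g h)).1

lemma mC_mul (g h : ↥G) : mC hG (g * h) = mA hG g * mC hG h + mC hG g :=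
  (aff_unique (mspec hG (g * h)) (mspec_mul hG g h)).2

section Red

variable {d : ℕ} (hd : d ∣ n)

noncomputable def rA (g : ↥G) : (ZMod d)ˣ :=
  Units.map (ZMod.castHom hd (ZMod d)).toMonoidHom (mA hG g)

noncomputable def rC (g : ↥G) : ZMod d := ZMod.castHom hd (ZMod d) (mC hG g)

lemma rA_val (g : ↥G) : (rA hG hd g : ZMod d) = ZMod.castHom hd (ZMod d) (mA hG g) := rfl

lemma rA_mul (g h : ↥G) : rA hG hd (g * h) = rA hG hd g * rA hG hd h := by
  unfold rA; rw [mA_mul hG, map_mul]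

lemma rC_mul (g h : ↥G) :
    rC hG hd (g * h) = rA hG hd g * rC hG hd h + rC hG hd g := by
  unfold rC
  rw [mC_mul hG, map_add, map_mul, rA_val]

noncomputable def φred : ↥G →* Equiv.Perm (ZMod d) :=
  MonoidHom.mk' (fun g => affP (rA hG hd g) (rC hG hd g)) (by
    intro g h
    show affP (rA hG hd (g * h)) (rC hG hd (g * h)) = _
    rw [affP_mul, rA_mul hG hd, rC_mul hG hd])

lemma φred_apply (g : ↥G) (y : ZMod d) :
    φred hG hd g y = rA hG hd g * y + rC hG hd g := rfl

lemma φred_cast (g : ↥G) (x : ZMod n) :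
    φred hG hd g (ZMod.castHom hd (ZMod d) x)
      = ZMod.castHom hd (ZMod d) ((g : Equiv.Perm (ZMod n)) x) := by
  rw [φred_apply, mspec hG g, map_add, map_mul, rA_val]
  rfl

lemma φred_isAff (g : ↥G) : IsAff (φred hG hd g) :=
  ⟨rA hG hd g, rC hG hd g, fun _ => rfl⟩

end Red

end Data

section Preim

noncomputable def preimEquiv {M N : Type*} [AddCommGroup M] [AddCommGroup N] (f : M →+ N)
    (hf : Function.Surjective f) (S : Set N) :
    (f ⁻¹' S) ≃ S × f.ker where
  toFun x := (⟨f x.1, x.2⟩,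
    ⟨x.1 - Function.surjInv hf (f x.1), by
      rw [AddMonoidHom.mem_ker, map_sub, Function.surjInv_eq hf, sub_self]⟩)
  invFun yk := ⟨Function.surjInv hf yk.1.1 + yk.2.1, by
    have hk : f yk.2.1 = 0 := yk.2.2
    simp only [Set.mem_preimage, map_add, hk, add_zero, Function.surjInv_eq hf]
    exact yk.1.2⟩
  left_inv x := by
    apply Subtype.ext
    simp only []
    rw [add_sub_cancel]
  right_inv yk := by
    have hk : f yk.2.1 = 0 := yk.2.2
    have hfy : f (Function.surjInv hf yk.1.1 + yk.2.1) = yk.1.1 := by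
      rw [map_add, hk, add_zero, Function.surjInv_eq hf]
    ext
    · exact hfy
    · simp only [hfy]
      rw [add_sub_cancel_left]

lemma card_preimage {M N : Type*} [AddCommGroup M] [AddCommGroup N] (f : M →+ N)
    (hf : Function.Surjective f) (S : Set N) :
    Nat.card (f ⁻¹' S) = Nat.card S * Nat.card f.ker := by
  rw [Nat.card_congr (preimEquiv f hf S), Nat.card_prod]

end Preim

section Trans

variable {n : ℕ} (G : Subgroup (Equiv.Perm (ZMod n)))

lemma affP_one_zero : affP (1 : (ZMod n)ˣ) 0 = 1 := by
  ext x; simp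

lemma affP_one_mul (a b : ZMod n) :
    affP (1 : (ZMod n)ˣ) a * affP 1 b = affP 1 (a + b) := by
  rw [affP_mul]; rw [one_mul]; rw [Units.val_one, one_mul, add_comm b a]

def transSub : AddSubgroup (ZMod n) where
  carrier := {t | affP 1 t ∈ G}
  zero_mem' := by
    simp only [Set.mem_setOf_eq, affP_one_zero]; exact G.one_mem
  add_mem' := by
    intro a b ha hb
    have := G.mul_mem ha hb
    rwa [affP_one_mul] at this
  neg_mem' := by
    intro a ha
    have h1 : affP (1:(ZMod n)ˣ) a * affP 1 (-a) = 1 := by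
      rw [affP_one_mul, add_neg_cancel, affP_one_zero]
    have h2 : affP (1:(ZMod n)ˣ) (-a) = (affP 1 a)⁻¹ := eq_inv_of_mul_eq_one_right h1
    simp only [Set.mem_setOf_eq, h2]
    exact G.inv_mem ha

lemma mem_transSub_iff {t : ZMod n} : t ∈ transSub G ↔ affP 1 t ∈ G := Iff.rfl

variable {m : ℕ} (hm : m ∣ n)

noncomputable def castAdd : ZMod n →+ ZMod m :=
  AddMonoidHom.mk' (ZMod.castHom hm (ZMod m)) (map_add _)

lemma castAdd_apply (x : ZMod n) : castAdd hm x = ZMod.castHom hm (ZMod m) x := rfl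

lemma castAdd_surj (hmpos : 0 < m) : Function.Surjective (castAdd hm) := by
  haveI : NeZero m := ⟨hmpos.ne'⟩
  intro y
  refine ⟨((y.val : ℕ) : ZMod n), ?_⟩
  rw [castAdd_apply, map_natCast, ZMod.natCast_zmod_val]

lemma card_ker_castAdd (hmpos : 0 < m) :
    Nat.card (castAdd (n := n) hm).ker * m = n := by
  haveI : NeZero m := ⟨hmpos.ne'⟩
  have hiso := QuotientAddGroup.quotientKerEquivOfSurjective _ (castAdd_surj hm hmpos)
  have h1 : Nat.card (ZMod n) = Nat.card (ZMod n ⧸ (castAdd (n := n) hm).ker) * Nat.card (castAdd (n := n) hm).ker :=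
    AddSubgroup.card_eq_card_quotient_mul_card_addSubgroup _
  rw [Nat.card_congr hiso.toEquiv] at h1
  rw [Nat.card_zmod, Nat.card_zmod] at h1
  rw [mul_comm]
  omega

end Trans

section Ker

variable {n : ℕ} {G : Subgroup (Equiv.Perm (ZMod n))}

lemma transSub_eq_ker (hn : 0 < n) {h m : ℕ} (hcard : Nat.card (transSub G) = h)
    (hpos : 0 < h) (hmh : m * h = n) (hm : m ∣ n) :
    transSub G = (castAdd (n := n) hm).ker := by
  haveI : NeZero n := ⟨hn.ne'⟩
  have hmpos : 0 < m := by
    rcases Nat.eq_zero_or_pos m with h0 | h0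
    · exfalso; rw [h0, zero_mul] at hmh; omega
    · exact h0
  haveI : NeZero m := ⟨hmpos.ne'⟩
  have hle : transSub G ≤ (castAdd (n := n) hm).ker := by
    intro t ht
    rw [AddMonoidHom.mem_ker, castAdd_apply]
    have h1 : addOrderOf t ∣ h := hcard ▸ AddSubgroup.addOrderOf_dvd_natCard _ ht
    have h2 : h • t = 0 := addOrderOf_dvd_iff_nsmul_eq_zero.mp h1
    rw [nsmul_eq_mul] at h2
    have h3 : ((h * t.val : ℕ) : ZMod n) = 0 := by
      push_cast
      rw [ZMod.natCast_zmod_val]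
      exact h2
    have h4 : n ∣ h * t.val := (ZMod.natCast_eq_zero_iff _ _).mp h3
    have h5 : m ∣ t.val := by
      have h4' : m * h ∣ t.val * h := by rw [hmh, mul_comm t.val h]; exact h4
      exact (Nat.mul_dvd_mul_iff_right hpos).mp h4' 
    rw [ZMod.castHom_apply, ← ZMod.natCast_val]
    exact (ZMod.natCast_eq_zero_iff _ _).mpr h5
  have hker : Nat.card (castAdd (n := n) hm).ker = h := by
    have := card_ker_castAdd hm hmpos
    have h6 : Nat.card (castAdd (n := n) hm).ker * m = m * h := by rw [this, hmh]
    rw [mul_comm m h] at h6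
    exact Nat.eq_of_mul_eq_mul_right hmpos h6
  exact AddSubgroup.eq_of_le_of_card_ge hle (by rw [hker, hcard])

end Ker

section Case1

variable {n : ℕ} {G : Subgroup (Equiv.Perm (ZMod n))} (hG : ∀ g ∈ G, IsAff g)

lemma orbit_preimage (hn : 0 < n) {h m : ℕ} (hcard : Nat.card (transSub G) = h)
    (hpos : 0 < h) (hmh : m * h = n) (hm : m ∣ n) (w : ZMod n) :
    (castAdd (n := n) hm) ⁻¹' (oorb (φred hG hm) (ZMod.castHom hm (ZMod m) w))
      = oorb G.subtype w := by
  have hker := transSub_eq_ker (G := G) hn hcard hpos hmh hm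
  ext x
  constructor
  · intro hx
    rcases hx with ⟨g, hg⟩
    have hg' : φred hG hm g (ZMod.castHom hm (ZMod m) w) = castAdd hm x := hg
    have h1 : ZMod.castHom hm (ZMod m) ((g : Equiv.Perm (ZMod n)) w)
        = ZMod.castHom hm (ZMod m) x := by
      rw [← φred_cast hG hm g w, hg', castAdd_apply]
    have ht : x - (g : Equiv.Perm (ZMod n)) w ∈ transSub G := by
      rw [hker, AddMonoidHom.mem_ker, map_sub, castAdd_apply, castAdd_apply, h1, sub_self]
    refine ⟨(⟨affP 1 _, ht⟩ : ↥G) * g, ?_⟩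
    show affP 1 (x - (g : Equiv.Perm (ZMod n)) w) ((g : Equiv.Perm (ZMod n)) w) = x
    rw [affP_apply, Units.val_one, one_mul, add_sub_cancel]
  · rintro ⟨g, rfl⟩
    exact ⟨g, φred_cast hG hm g w⟩

lemma card_orbit_case1 (hn : 0 < n) {h m : ℕ} (hcard : Nat.card (transSub G) = h)
    (hpos : 0 < h) (hmh : m * h = n) (hm : m ∣ n) (hmpos : 0 < m) (w : ZMod n) :
    Nat.card (MulAction.orbit G w)
      = Nat.card (MulAction.orbit (φred hG hm).range (ZMod.castHom hm (ZMod m) w)) * h := by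
  have hker := transSub_eq_ker (G := G) hn hcard hpos hmh hm
  have hkcard : Nat.card (castAdd (n := n) hm).ker = h := by rw [← hker, hcard]
  rw [orbit_subgroup_eq_oorb, ← orbit_preimage hG hn hcard hpos hmh hm w,
    card_preimage (castAdd hm) (castAdd_surj hm hmpos), hkcard, ← oorb_eq_orbit_range]

lemma case1 (hGa : ∀ g ∈ G, IsAff g) (hn : 0 < n) (hT : ∃ t : ZMod n, t ≠ 0 ∧ affP 1 t ∈ G)
    (IH : ∀ m', m' < n → 0 < m' → ∀ (G' : Subgroup (Equiv.Perm (ZMod m'))),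
      (∀ g ∈ G', IsAff g) →
      sInf {k : ℕ | ∃ w : ZMod m', k = Nat.card (MulAction.orbit G' w)} ∣ m') :
    sInf {k : ℕ | ∃ w : ZMod n, k = Nat.card (MulAction.orbit G w)} ∣ n := by
  haveI : NeZero n := ⟨hn.ne'⟩
  set h := Nat.card (transSub G) with hhdef
  have hdvd : h ∣ n := by
    have := AddSubgroup.card_addSubgroup_dvd_card (transSub G)
    rwa [Nat.card_zmod] at this
  have hpos : 0 < h := Nat.card_pos
  have hbig : 1 < h := by
    rcases hT with ⟨t, ht0, htG⟩
    by_contra hle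
    push_neg at hle
    have hle2 : Nat.card (transSub G) ≤ 1 := hhdef ▸ hle
    have hbot : transSub G = ⊥ := AddSubgroup.eq_bot_of_card_le (transSub G) hle2
    have htmem : t ∈ transSub G := htG
    rw [hbot, AddSubgroup.mem_bot] at htmem
    exact ht0 htmem
  set m := n / h with hmdef
  have hmh : m * h = n := Nat.div_mul_cancel hdvd
  have hm : m ∣ n := ⟨h, hmh.symm⟩
  have hmlt : m < n := Nat.div_lt_self hn hbig
  have hmpos : 0 < m := by
    rcases Nat.eq_zero_or_pos m with h0 | h0
    · exfalso; rw [h0, zero_mul] at hmh; omega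
    · exact h0
  set Gb := (φred hGa hm).range with hGbdef
  have hGb : ∀ g ∈ Gb, IsAff g := by rintro g ⟨g₀, rfl⟩; exact φred_isAff hGa hm g₀
  have hIH := IH m hmlt hmpos Gb hGb
  have hSbne : {k : ℕ | ∃ w : ZMod m, k = Nat.card (MulAction.orbit Gb w)}.Nonempty :=
    ⟨_, 0, rfl⟩
  set d := sInf {k : ℕ | ∃ w : ZMod m, k = Nat.card (MulAction.orbit Gb w)} with hddef
  obtain ⟨ub, hub⟩ := Nat.sInf_mem hSbne
  obtain ⟨u, hu⟩ := castAdd_surj (n := n) hm hmpos ub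
  have hformula := card_orbit_case1 hGa hn rfl hpos hmh hm hmpos
  have hcu : Nat.card (MulAction.orbit G u) = d * h := by
    rw [hformula u]
    rw [castAdd_apply] at hu
    rw [hu, ← hub]
  have hSne : {k : ℕ | ∃ w : ZMod n, k = Nat.card (MulAction.orbit G w)}.Nonempty :=
    ⟨_, 0, rfl⟩
  obtain ⟨w₀, hw₀⟩ := Nat.sInf_mem hSne
  have hle1 : sInf {k : ℕ | ∃ w : ZMod n, k = Nat.card (MulAction.orbit G w)} ≤ d * h :=
    Nat.sInf_le ⟨u, hcu.symm⟩
  have hge : d * h ≤ sInf {k : ℕ | ∃ w : ZMod n, k = Nat.card (MulAction.orbit G w)} := by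
    rw [hw₀, hformula w₀]
    have hd : d ≤ Nat.card (MulAction.orbit Gb (ZMod.castHom hm (ZMod m) w₀)) :=
      Nat.sInf_le ⟨_, rfl⟩
    exact Nat.mul_le_mul_right h hd
  have hlam : sInf {k : ℕ | ∃ w : ZMod n, k = Nat.card (MulAction.orbit G w)} = d * h :=
    le_antisymm hle1 hge
  rw [hlam, ← hmh]
  exact mul_dvd_mul hIH dvd_rfl

end Case1

section Comm

variable {n : ℕ} {G : Subgroup (Equiv.Perm (ZMod n))}

lemma eq_translation_of_mA_eq_one (hG : ∀ g ∈ G, IsAff g) {g : ↥G} (h1 : mA hG g = 1) :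
    (g : Equiv.Perm (ZMod n)) = affP 1 (mC hG g) := by
  ext x
  rw [mspec hG g x, affP_apply, h1]

open scoped commutatorElement in
lemma comm_of_no_translation (hG : ∀ g ∈ G, IsAff g)
    (hnt : ∀ t : ZMod n, affP 1 t ∈ G → t = 0) :
    ∀ g h : ↥G, g * h = h * g := by
  intro g h
  rw [← commutatorElement_eq_one_iff_mul_comm]
  set k := ⁅g, h⁆ with hk
  have hmA : mA hG k = 1 := by
    have : mA hG k = mA hG g * mA hG h * (mA hG g)⁻¹ * (mA hG h)⁻¹ := by
      rw [hk, commutatorElement_def]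
      have hhom := MonoidHom.mk' (mA hG) (mA_mul hG)
      show MonoidHom.mk' (mA hG) (mA_mul hG) (g * h * g⁻¹ * h⁻¹) = _
      rw [map_mul, map_mul, map_mul, map_inv, map_inv]
      rfl
    rw [this]
    rw [mul_comm (mA hG g) (mA hG h), mul_assoc, mul_assoc, ← mul_assoc (mA hG g),
      mul_inv_cancel, one_mul, mul_inv_cancel]
  have htr : (k : Equiv.Perm (ZMod n)) = affP 1 (mC hG k) :=
    eq_translation_of_mA_eq_one hG hmA
  have hmem : affP 1 (mC hG k) ∈ G := htr ▸ k.2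
  have hc0 : mC hG k = 0 := hnt _ hmem
  have : (k : Equiv.Perm (ZMod n)) = 1 := by
    rw [htr, hc0, affP_one_zero]
  exact Subtype.ext this

end Comm

section PCompl

variable {Γ : Type*} [Group Γ] [Finite Γ] (hcomm : ∀ a b : Γ, a * b = b * a)
  (p : ℕ) (hp : p.Prime)

def pCompl : Subgroup Γ where
  carrier := {g | ¬ p ∣ orderOf g}
  one_mem' := by
    simp only [Set.mem_setOf_eq, orderOf_one, Nat.dvd_one]
    exact hp.ne_one
  mul_mem' := by
    intro a b ha hb
    simp only [Set.mem_setOf_eq] at *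
    intro hdvd
    have hlcm : orderOf (a * b) ∣ Nat.lcm (orderOf a) (orderOf b) :=
      Commute.orderOf_mul_dvd_lcm (hcomm a b)
    have h2 : p ∣ Nat.lcm (orderOf a) (orderOf b) := hdvd.trans hlcm
    have h3 : p ∣ orderOf a * orderOf b :=
      h2.trans (Nat.lcm_dvd_mul _ _)
    rcases (Nat.Prime.dvd_mul hp).mp h3 with h | h
    · exact ha h
    · exact hb h
  inv_mem' := by
    intro a ha
    simp only [Set.mem_setOf_eq, orderOf_inv] at *
    exact ha

lemma mem_pCompl_iff {g : Γ} : g ∈ pCompl hcomm p hp ↔ ¬ p ∣ orderOf g := Iff.rfl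

lemma pCompl_normal : (pCompl hcomm p hp).Normal := by
  constructor
  intro b hb g
  have : g * b * g⁻¹ = b := by
    rw [hcomm g b, mul_assoc, mul_inv_cancel, mul_one]
  rw [this]
  exact hb

lemma not_dvd_card_pCompl : ¬ p ∣ Nat.card (pCompl hcomm p hp) := by
  intro hdvd
  haveI : Fact p.Prime := ⟨hp⟩
  obtain ⟨b, hb⟩ := exists_prime_orderOf_dvd_card' p hdvd
  have hoc : orderOf (b : Γ) = p := by rw [Subgroup.orderOf_coe]; exact hb
  exact b.2 (by rw [hoc])

lemma prime_dvd_index_pCompl {q : ℕ} (hq : q.Prime)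
    (hdvd : q ∣ (pCompl hcomm p hp).index) : q = p := by
  haveI := pCompl_normal hcomm p hp
  haveI : Fact q.Prime := ⟨hq⟩
  rw [Subgroup.index_eq_card] at hdvd
  obtain ⟨x, hx⟩ := exists_prime_orderOf_dvd_card' q hdvd
  obtain ⟨g, rfl⟩ := QuotientGroup.mk_surjective x
  set t := orderOf g with htdef
  have ht0 : t ≠ 0 := (orderOf_pos g).ne'
  have hproj_dvd : p ^ t.factorization p ∣ t := Nat.ordProj_dvd t p
  have hppos : p ^ t.factorization p ≠ 0 := (Nat.pow_pos hp.pos).ne'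
  have hord : orderOf (g ^ (p ^ t.factorization p)) = t / p ^ t.factorization p :=
    orderOf_pow_of_dvd hppos hproj_dvd
  have hmem : g ^ (p ^ t.factorization p) ∈ pCompl hcomm p hp := by
    rw [mem_pCompl_iff, hord]
    intro hpd
    have hcop : Nat.Coprime p (t / p ^ t.factorization p) := Nat.coprime_ordCompl hp ht0
    rw [Nat.Prime.coprime_iff_not_dvd hp] at hcop
    exact hcop hpd
  have hone : (QuotientGroup.mk g : Γ ⧸ pCompl hcomm p hp) ^ (p ^ t.factorization p) = 1 := by
    rw [← QuotientGroup.mk_pow]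
    exact (QuotientGroup.eq_one_iff _).mpr hmem
  have hdvd2 : q ∣ p ^ t.factorization p := hx ▸ orderOf_dvd_of_pow_eq_one hone
  have := hq.dvd_of_dvd_pow hdvd2
  exact (Nat.prime_dvd_prime_iff_eq hq hp).mp this

end PCompl

section Avg

variable {n : ℕ} {G : Subgroup (Equiv.Perm (ZMod n))} (hG : ∀ g ∈ G, IsAff g)
  {d : ℕ} (hd : d ∣ n) (B : Subgroup ↥G) [Fintype ↥B]
  (V : (ZMod d)ˣ)

noncomputable def avg (x : ZMod d) : ZMod d :=
  ((V⁻¹ : (ZMod d)ˣ) : ZMod d) * ∑ b : ↥B, φred hG hd (↑b : ↥G) x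

lemma avg_comp (hV : (V : ZMod d) = (Nat.card ↥B : ZMod d)) (g : ↥G) (x : ZMod d) :
    φred hG hd g (avg hG hd B V x)
      = ((V⁻¹ : (ZMod d)ˣ) : ZMod d) * ∑ b : ↥B, φred hG hd (g * (↑b : ↥G)) x := by
  rw [avg, φred_apply]
  have hterm : ∀ b : ↥B, φred hG hd (g * (↑b : ↥G)) x
      = (rA hG hd g : ZMod d) * (φred hG hd (↑b : ↥G) x) + rC hG hd g := by
    intro b
    rw [φred_apply, φred_apply, rA_mul, rC_mul, Units.val_mul]
    ring
  rw [Finset.sum_congr rfl (fun b _ => hterm b), Finset.sum_add_distrib, ← Finset.mul_sum,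
    Finset.sum_const, Finset.card_univ]
  have hcard : ((Fintype.card ↥B : ℕ) : ZMod d) = (V : ZMod d) := by
    rw [hV, Nat.card_eq_fintype_card]
  have hu : ((V⁻¹ : (ZMod d)ˣ) : ZMod d) * (V : ZMod d) = 1 := Units.inv_mul _
  rw [nsmul_eq_mul, hcard]
  linear_combination (-(rC hG hd g)) * hu

lemma avg_fixed (hV : (V : ZMod d) = (Nat.card ↥B : ZMod d)) (b₀ : ↥B) (x : ZMod d) :
    φred hG hd (↑b₀ : ↥G) (avg hG hd B V x) = avg hG hd B V x := by
  rw [avg_comp hG hd B V hV, avg]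
  congr 1
  exact Fintype.sum_equiv (Equiv.mulLeft b₀)
    (fun b : ↥B => φred hG hd ((↑b₀ : ↥G) * (↑b : ↥G)) x)
    (fun b : ↥B => φred hG hd (↑b : ↥G) x)
    (fun b => rfl)

lemma avg_equi (hV : (V : ZMod d) = (Nat.card ↥B : ZMod d))
    (hcomm : ∀ a b : ↥G, a * b = b * a) (g : ↥G) (x : ZMod d) :
    φred hG hd g (avg hG hd B V x) = avg hG hd B V (φred hG hd g x) := by
  rw [avg_comp hG hd B V hV, avg]
  congr 1
  apply Finset.sum_congr rfl
  intro b _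
  rw [hcomm g ↑b, map_mul]
  rfl

end Avg

section CRT

variable {n d₁ d₂ : ℕ} (hd₁ : d₁ ∣ n) (hd₂ : d₂ ∣ n)

lemma crt_inj (hsplit : d₁ * d₂ = n) (hcop : Nat.Coprime d₁ d₂) (hn : 0 < n)
    {x y : ZMod n} (h1 : ZMod.castHom hd₁ (ZMod d₁) x = ZMod.castHom hd₁ (ZMod d₁) y)
    (h2 : ZMod.castHom hd₂ (ZMod d₂) x = ZMod.castHom hd₂ (ZMod d₂) y) : x = y := by
  haveI : NeZero n := ⟨hn.ne'⟩
  have hv : ∀ (d : ℕ) (hd : d ∣ n) (z : ZMod n),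
      ZMod.castHom hd (ZMod d) z = ((z.val : ℕ) : ZMod d) := by
    intro d hd z
    rw [ZMod.castHom_apply, ← ZMod.natCast_val]
  rw [hv d₁ hd₁ x, hv d₁ hd₁ y, ZMod.natCast_eq_natCast_iff] at h1
  rw [hv d₂ hd₂ x, hv d₂ hd₂ y, ZMod.natCast_eq_natCast_iff] at h2
  have h3 : x.val ≡ y.val [MOD d₁ * d₂] :=
    (Nat.modEq_and_modEq_iff_modEq_mul hcop).mp ⟨h1, h2⟩
  rw [hsplit] at h3
  have h4 : ((x.val : ℕ) : ZMod n) = ((y.val : ℕ) : ZMod n) :=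
    (ZMod.natCast_eq_natCast_iff _ _ _).mpr h3
  rwa [ZMod.natCast_zmod_val, ZMod.natCast_zmod_val] at h4

lemma crt_surj (hsplit : d₁ * d₂ = n) (hcop : Nat.Coprime d₁ d₂) (hn : 0 < n)
    (hd₁pos : 0 < d₁) (hd₂pos : 0 < d₂) (a : ZMod d₁) (b : ZMod d₂) :
    ∃ x : ZMod n, ZMod.castHom hd₁ (ZMod d₁) x = a ∧ ZMod.castHom hd₂ (ZMod d₂) x = b := by
  haveI : NeZero n := ⟨hn.ne'⟩
  haveI : NeZero d₁ := ⟨hd₁pos.ne'⟩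
  haveI : NeZero d₂ := ⟨hd₂pos.ne'⟩
  set F : ZMod n → ZMod d₁ × ZMod d₂ :=
    fun x => (ZMod.castHom hd₁ (ZMod d₁) x, ZMod.castHom hd₂ (ZMod d₂) x) with hF
  have hinj : Function.Injective F := by
    intro x y hxy
    rw [hF, Prod.mk.injEq] at hxy
    exact crt_inj hd₁ hd₂ hsplit hcop hn hxy.1 hxy.2
  have hbij : Function.Bijective F := by
    rw [Fintype.bijective_iff_injective_and_card]
    refine ⟨hinj, ?_⟩
    rw [Fintype.card_prod, ZMod.card, ZMod.card, ZMod.card, hsplit]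
  obtain ⟨x, hx⟩ := hbij.2 (a, b)
  rw [hF, Prod.mk.injEq] at hx
  exact ⟨x, hx.1, hx.2⟩

end CRT

section Case2

lemma dvd_prime_pow_of_le {a p e : ℕ} (hp : p.Prime) (ha : a ≠ 0)
    (hq : ∀ q : ℕ, q.Prime → q ∣ a → q = p) (hle : a ≤ p ^ e) : a ∣ p ^ e := by
  have h1 : a = p ^ a.primeFactorsList.length :=
    Nat.eq_prime_pow_of_unique_prime_dvd ha (fun {d} hd hdvd => hq d hd hdvd)
  rw [h1] at hle ⊢
  exact pow_dvd_pow p ((Nat.pow_le_pow_iff_right hp.one_lt).mp hle)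

lemma case2 {n : ℕ} {G : Subgroup (Equiv.Perm (ZMod n))} (hGa : ∀ g ∈ G, IsAff g)
    (hn1 : 1 < n)
    (hnt : ∀ t : ZMod n, affP 1 t ∈ G → t = 0)
    (IH : ∀ m', m' < n → 0 < m' → ∀ (G' : Subgroup (Equiv.Perm (ZMod m'))),
      (∀ g ∈ G', IsAff g) →
      sInf {k : ℕ | ∃ w : ZMod m', k = Nat.card (MulAction.orbit G' w)} ∣ m') :
    sInf {k : ℕ | ∃ w : ZMod n, k = Nat.card (MulAction.orbit G w)} ∣ n := by
  have hn : 0 < n := by omega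
  haveI : NeZero n := ⟨hn.ne'⟩
  have hcomm := comm_of_no_translation hGa hnt
  set p := n.minFac with hpdef
  have hp : p.Prime := Nat.minFac_prime (by omega)
  haveI : Fact p.Prime := ⟨hp⟩
  set e := n.factorization p with hedef
  set pe := p ^ e with hpedef
  set m' := n / pe with hm'def
  have hpe_dvd : pe ∣ n := Nat.ordProj_dvd n p
  have hsplit : pe * m' = n := Nat.ordProj_mul_ordCompl_eq_self n p
  have hpdvd : p ∣ n := Nat.minFac_dvd n
  have hepos : 0 < e := hp.factorization_pos_of_dvd hn.ne' hpdvd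
  have hpe1 : 1 < pe := by
    calc 1 < p := hp.one_lt
    _ ≤ p ^ e := Nat.le_self_pow hepos.ne' p
  have hpe_pos : 0 < pe := by omega
  have hm'_dvd : m' ∣ n := Nat.ordCompl_dvd n p
  have hm'_pos : 0 < m' := Nat.ordCompl_pos p hn.ne'
  have hm'_lt : m' < n := Nat.div_lt_self hn hpe1
  have hcop : Nat.Coprime pe m' := (Nat.coprime_ordCompl hp hn.ne').pow_left e
  haveI : NeZero pe := ⟨hpe_pos.ne'⟩
  haveI : NeZero m' := ⟨hm'_pos.ne'⟩
  -- the p-complement subgroup and averaging unit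
  set B := pCompl hcomm p hp with hBdef
  letI : Fintype ↥B := Fintype.ofFinite _
  have hcopB : Nat.Coprime (Nat.card ↥B) pe := by
    have h1 : ¬ p ∣ Nat.card ↥B := not_dvd_card_pCompl hcomm p hp
    have h2 : Nat.Coprime p (Nat.card ↥B) := (hp.coprime_iff_not_dvd).mpr h1
    exact Nat.Coprime.pow_right e h2.symm
  set V : (ZMod pe)ˣ := ZMod.unitOfCoprime _ hcopB with hVdef
  have hV : (V : ZMod pe) = (Nat.card ↥B : ZMod pe) := ZMod.coe_unitOfCoprime _ hcopB
  -- minimal orbit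
  have hSne : {k : ℕ | ∃ w : ZMod n, k = Nat.card (MulAction.orbit G w)}.Nonempty :=
    ⟨_, 0, rfl⟩
  obtain ⟨w, hw⟩ := Nat.sInf_mem hSne
  set wp := ZMod.castHom hpe_dvd (ZMod pe) w with hwp
  set w' := ZMod.castHom hm'_dvd (ZMod m') w with hw'
  set up := avg hGa hpe_dvd B V wp with hup
  set A1 := ostab (φred hGa hpe_dvd) up with hA1
  set Kw := ostab (φred hGa hm'_dvd) w' with hKwdef
  set Sp := ostab (φred hGa hpe_dvd) wp with hSpdef
  have hBA1 : B ≤ A1 := by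
    intro b hb
    exact avg_fixed hGa hpe_dvd B V hV ⟨b, hb⟩ wp
  have hSpA1 : Sp ≤ A1 := by
    intro g hg
    rw [hSpdef, mem_ostab_iff] at hg
    rw [hA1, mem_ostab_iff, hup, avg_equi hGa hpe_dvd B V hV hcomm g wp, hg]
  -- index of A1 divides pe
  have hA1ind_ne : A1.index ≠ 0 := Subgroup.index_ne_zero_of_finite
  have hA1primes : ∀ q : ℕ, q.Prime → q ∣ A1.index → q = p := by
    intro q hq hdvd
    have h1 : A1.index ∣ B.index := Subgroup.index_dvd_of_le hBA1
    exact prime_dvd_index_pCompl hcomm p hp hq (hdvd.trans h1)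
  have hA1le : A1.index ≤ pe := by
    rw [hA1, ← card_oorb]
    calc Nat.card (oorb (φred hGa hpe_dvd) up) ≤ Nat.card (ZMod pe) :=
      Nat.card_le_card_of_injective _ Subtype.coe_injective
    _ = pe := Nat.card_zmod pe
  have hA1dvd : A1.index ∣ pe := dvd_prime_pow_of_le hp hA1ind_ne hA1primes hA1le
  -- apply induction hypothesis to the action of A1 on ZMod m'
  set ψ := (φred hGa hm'_dvd).comp A1.subtype with hψdef
  set Gb := ψ.range with hGbdef
  have hGbaff : ∀ g ∈ Gb, IsAff g := by
    rintro g ⟨g₀, rfl⟩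
    exact φred_isAff hGa hm'_dvd _
  have hIH := IH m' hm'_lt hm'_pos Gb hGbaff
  have hSbne : {k : ℕ | ∃ y : ZMod m', k = Nat.card (MulAction.orbit Gb y)}.Nonempty :=
    ⟨_, 0, rfl⟩
  obtain ⟨u', hu'⟩ := Nat.sInf_mem hSbne
  set d' := sInf {k : ℕ | ∃ y : ZMod m', k = Nat.card (MulAction.orbit Gb y)} with hd'def
  set Ku := ostab (φred hGa hm'_dvd) u' with hKudef
  have hostab_sub : ∀ y : ZMod m',
      ostab ψ y = (ostab (φred hGa hm'_dvd) y).subgroupOf A1 := by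
    intro y
    ext g
    rw [Subgroup.mem_subgroupOf]
    exact Iff.rfl
  have hcard_sub : ∀ y : ZMod m',
      Nat.card (MulAction.orbit Gb y) = (ostab (φred hGa hm'_dvd) y).relIndex A1 := by
    intro y
    rw [hGbdef, ← oorb_eq_orbit_range, card_oorb, hostab_sub y]
    rfl
  have hd'rel : d' = Ku.relIndex A1 := hu'.trans (hcard_sub u')
  -- build the combined point u
  obtain ⟨u, hupe, hum'⟩ := crt_surj hpe_dvd hm'_dvd hsplit hcop hn hpe_pos hm'_pos up u'
  have hstab_gen : ∀ x : ZMod n, ostab G.subtype x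
      = ostab (φred hGa hpe_dvd) (ZMod.castHom hpe_dvd (ZMod pe) x)
        ⊓ ostab (φred hGa hm'_dvd) (ZMod.castHom hm'_dvd (ZMod m') x) := by
    intro x
    ext g
    simp only [mem_ostab_iff, Subgroup.mem_inf]
    constructor
    · intro hgx
      have hgx' : (g : Equiv.Perm (ZMod n)) x = x := hgx
      constructor
      · rw [φred_cast, hgx']
      · rw [φred_cast, hgx']
    · rintro ⟨h1, h2⟩
      rw [φred_cast] at h1 h2
      exact crt_inj hpe_dvd hm'_dvd hsplit hcop hn h1 h2
  have hstab_u : ostab G.subtype u = A1 ⊓ Ku := by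
    rw [hstab_gen u, hupe, hum']
  have hcard_u : Nat.card (MulAction.orbit G u) = Ku.relIndex A1 * A1.index := by
    rw [orbit_subgroup_eq_oorb, card_oorb, hstab_u, ← Subgroup.relIndex_mul_index
      (inf_le_left : A1 ⊓ Ku ≤ A1), Subgroup.inf_relIndex_left]
  have hwcard : sInf {k : ℕ | ∃ w : ZMod n, k = Nat.card (MulAction.orbit G w)}
      = (Sp ⊓ Kw).index := by
    rw [hw, orbit_subgroup_eq_oorb, card_oorb, hstab_gen w, ← hwp, ← hw']
  have hd'le : d' ≤ Kw.relIndex A1 := by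
    have h2 : Kw.relIndex A1 = Nat.card (MulAction.orbit Gb w') := (hcard_sub w').symm
    rw [h2, hd'def]
    exact Nat.sInf_le ⟨w', rfl⟩
  have hSpKw_ne : (Sp ⊓ Kw).index ≠ 0 := Subgroup.index_ne_zero_of_finite
  have hchain : Ku.relIndex A1 * A1.index ≤ (Sp ⊓ Kw).index := by
    calc Ku.relIndex A1 * A1.index ≤ Kw.relIndex A1 * A1.index := by
          apply Nat.mul_le_mul_right
          rw [← hd'rel]; exact hd'le
    _ = (A1 ⊓ Kw).index := by
          rw [← Subgroup.inf_relIndex_left,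
            Subgroup.relIndex_mul_index (inf_le_left : A1 ⊓ Kw ≤ A1)]
    _ ≤ (Sp ⊓ Kw).index := by
          apply Nat.le_of_dvd (Nat.pos_of_ne_zero hSpKw_ne)
          exact Subgroup.index_dvd_of_le (inf_le_inf_right Kw hSpA1)
  have hle2 : sInf {k : ℕ | ∃ w : ZMod n, k = Nat.card (MulAction.orbit G w)}
      ≤ Ku.relIndex A1 * A1.index := Nat.sInf_le ⟨u, hcard_u.symm⟩
  have hge2 : Ku.relIndex A1 * A1.index
      ≤ sInf {k : ℕ | ∃ w : ZMod n, k = Nat.card (MulAction.orbit G w)} := by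
    rw [hwcard]; exact hchain
  have heq : sInf {k : ℕ | ∃ w : ZMod n, k = Nat.card (MulAction.orbit G w)}
      = Ku.relIndex A1 * A1.index := le_antisymm hle2 hge2
  have hsplit' : m' * pe = n := by rw [← hsplit, mul_comm]
  have h2 : Ku.relIndex A1 * A1.index ∣ m' * pe := mul_dvd_mul (hd'rel ▸ hIH) hA1dvd
  rw [heq]
  exact h2.trans (dvd_of_eq hsplit')

end Case2

theorem main_thm : ∀ n : ℕ, 0 < n → ∀ (G : Subgroup (Equiv.Perm (ZMod n))),
    (∀ g ∈ G, IsAff g) →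
    sInf {k : ℕ | ∃ w : ZMod n, k = Nat.card (MulAction.orbit G w)} ∣ n := by
  intro n
  induction n using Nat.strong_induction_on with
  | _ n IH =>
    intro hn G hGa
    rcases eq_or_lt_of_le (Nat.succ_le_of_lt hn : 1 ≤ n) with h1 | h1
    · -- n = 1
      have hn1 : n = 1 := h1.symm
      subst hn1
      have hone : ∀ k ∈ {k : ℕ | ∃ w : ZMod 1, k = Nat.card (MulAction.orbit G w)}, k = 1 := by
        rintro k ⟨w, rfl⟩
        haveI : Nonempty (MulAction.orbit G w) := ⟨⟨w, MulAction.mem_orbit_self w⟩⟩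
        have hle : Nat.card (MulAction.orbit G w) ≤ Nat.card (ZMod 1) :=
          Nat.card_le_card_of_injective _ Subtype.coe_injective
        rw [Nat.card_zmod] at hle
        have hpos : 0 < Nat.card (MulAction.orbit G w) := Nat.card_pos
        omega
      have hSne : {k : ℕ | ∃ w : ZMod 1, k = Nat.card (MulAction.orbit G w)}.Nonempty :=
        ⟨_, 0, rfl⟩
      have := hone _ (Nat.sInf_mem hSne)
      rw [this]
    · by_cases hT : ∃ t : ZMod n, t ≠ 0 ∧ affP 1 t ∈ G
      · exact case1 hGa hn hT (fun m' hlt hpos G' hG' => IH m' hlt hpos G' hG')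
      · push_neg at hT
        have hnt : ∀ t : ZMod n, affP 1 t ∈ G → t = 0 := by
          intro t htG
          by_contra h0
          exact hT t h0 htG
        exact case2 hGa h1 hnt (fun m' hlt hpos G' hG' => IH m' hlt hpos G' hG')

end Stmt8

theorem stmt_8 (n : ℕ) (hn : 0 < n) (G : Subgroup (Equiv.Perm (ZMod n)))
    (hG : ∀ g ∈ G, ∃ (a : (ZMod n)ˣ) (b : ZMod n), ∀ x : ZMod n, g x = a * x + b) :
    sInf {k : ℕ | ∃ w : ZMod n, k = Nat.card (MulAction.orbit G w)} ∣ n :=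
  Stmt8.main_thm n hn G hG
end
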